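/- Let ε > 0, γ > 1, and n ≥ 2 an integer. There exists exactly one function h : [0,1] → ℝ that is continuous on [0,1], twice continuously differentiable on (0,1), and satisfies Lh = 0 on (0,1), h(0) = 0, and h(1) = 1. Moreover, this h is strictly increasing on [0,1], satisfies r < h(r) < r^α for all r ∈ (0,1), and there exists a constant C(ε) > 0, depending only on n, γ, and ε, such that h(r) < C(ε)·r for all r ∈ (0,1). -/

import Mathlib

open Set Filter Topology

noncomputable section

/-- The ODE operator `L`:
`(L h)(r) = h'' + ((n-2)/r + 2r/(ε+r²)) h' - ((n-2)/r² + 2/(γ(ε+r²))) h`. -/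
def Lop (n : ℕ) (γ ε : ℝ) (h : ℝ → ℝ) (r : ℝ) : ℝ :=
  deriv (deriv h) r + (((n:ℝ) - 2)/r + 2*r/(ε + r^2)) * deriv h r
    - (((n:ℝ) - 2)/r^2 + 2/(γ*(ε + r^2))) * h r

/-- `α := (-(n-1) + √((n-1)² + 4(n-2 + 2/γ)))/2`. -/
def alphaN (n : ℕ) (γ : ℝ) : ℝ :=
  (-((n:ℝ) - 1) + Real.sqrt (((n:ℝ)-1)^2 + 4*((n:ℝ) - 2 + 2/γ)))/2

/-- `h` is a normalized solution of `Lh = 0` on `(0,1)`: continuous on `[0,1]`,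
twice continuously differentiable on `(0,1)`, with `h(0) = 0` and `h(1) = 1`. -/
def IsODESol (n : ℕ) (γ ε : ℝ) (h : ℝ → ℝ) : Prop :=
  ContinuousOn h (Icc (0:ℝ) 1) ∧ (∀ r ∈ Ioo (0:ℝ) 1, ContDiffAt ℝ 2 h r) ∧
    (∀ r ∈ Ioo (0:ℝ) 1, Lop n γ ε h r = 0) ∧ h 0 = 0 ∧ h 1 = 1

/-- first-order coefficient -/
def Bco (n : ℕ) (ε : ℝ) (r : ℝ) : ℝ := ((n:ℝ) - 2)/r + 2*r/(ε + r^2)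

/-- zeroth-order coefficient -/
def Cco (n : ℕ) (γ ε : ℝ) (r : ℝ) : ℝ := ((n:ℝ) - 2)/r^2 + 2/(γ*(ε + r^2))

lemma Lop_def (n : ℕ) (γ ε : ℝ) (h : ℝ → ℝ) (r : ℝ) :
    Lop n γ ε h r = deriv (deriv h) r + Bco n ε r * deriv h r - Cco n γ ε r * h r := rfl

section basic

variable {n : ℕ} {γ ε : ℝ} (hn : 2 ≤ n) (hγ : 1 < γ) (hε : 0 < ε)

include hε in
lemma s_pos (r : ℝ) : 0 < ε + r^2 := by positivity

include hn hγ hε in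
lemma Cco_pos (r : ℝ) : 0 < Cco n γ ε r := by
  have h1 : (0:ℝ) ≤ ((n:ℝ) - 2)/r^2 := by
    apply div_nonneg _ (sq_nonneg r)
    have : (2:ℝ) ≤ (n:ℝ) := by exact_mod_cast hn
    linarith
  have h2 : (0:ℝ) < 2/(γ*(ε + r^2)) := by
    apply div_pos two_pos
    exact mul_pos (by linarith) (by positivity)
  unfold Cco; linarith

include hn hγ in
lemma alpha_quad : (alphaN n γ)^2 + ((n:ℝ)-1) * alphaN n γ = (n:ℝ) - 2 + 2/γ := by
  have hnn : (2:ℝ) ≤ (n:ℝ) := by exact_mod_cast hn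
  have hγ0 : (0:ℝ) < γ := by linarith
  have hD : (0:ℝ) ≤ ((n:ℝ)-1)^2 + 4*((n:ℝ) - 2 + 2/γ) := by
    have : (0:ℝ) < 2/γ := by positivity
    nlinarith [sq_nonneg ((n:ℝ)-1)]
  have hs := Real.sq_sqrt hD
  unfold alphaN
  nlinarith [hs]

include hn hγ in
lemma alpha_pos : 0 < alphaN n γ := by
  have hnn : (2:ℝ) ≤ (n:ℝ) := by exact_mod_cast hn
  have hγ0 : (0:ℝ) < γ := by linarith
  have h2γ : (0:ℝ) < 2/γ := by positivity
  have hD : ((n:ℝ)-1)^2 < ((n:ℝ)-1)^2 + 4*((n:ℝ) - 2 + 2/γ) := by nlinarith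
  have h1 : ((n:ℝ)-1) < Real.sqrt (((n:ℝ)-1)^2 + 4*((n:ℝ) - 2 + 2/γ)) := by
    have := Real.sqrt_lt_sqrt (sq_nonneg ((n:ℝ)-1)) hD
    rwa [Real.sqrt_sq (by linarith : (0:ℝ) ≤ (n:ℝ)-1)] at this
  unfold alphaN; linarith

include hn hγ in
lemma alpha_lt_one : alphaN n γ < 1 := by
  have hnn : (2:ℝ) ≤ (n:ℝ) := by exact_mod_cast hn
  have hγ0 : (0:ℝ) < γ := by linarith
  have hq := alpha_quad hn hγ
  have ha := alpha_pos hn hγ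
  by_contra hcon
  push_neg at hcon
  have h2γ : 2/γ < 2 := by
    rw [div_lt_iff₀ hγ0]; linarith
  nlinarith

include hn hγ in
lemma alpha_gt_inv : 1/γ < alphaN n γ := by
  have hnn : (2:ℝ) ≤ (n:ℝ) := by exact_mod_cast hn
  have hγ0 : (0:ℝ) < γ := by linarith
  have hq := alpha_quad hn hγ
  have ha := alpha_pos hn hγ
  have hig : 0 < 1/γ := by positivity
  have hig1 : 1/γ < 1 := by rw [div_lt_iff₀ hγ0]; linarith
  by_contra hcon
  push_neg at hcon
  -- p(1/γ) = (1/γ - 1)(1/γ + n - 2) < 0, p increasing on positives, p(α)=0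
  have hp : (1/γ)^2 + ((n:ℝ)-1)*(1/γ) - ((n:ℝ) - 2 + 2/γ) = (1/γ - 1)*(1/γ + (n:ℝ) - 2) := by
    field_simp; ring
  nlinarith [mul_pos hig (sub_pos.mpr hig1)]

end basic

section helpers

/-- From `C²` at a point: eventual differentiability plus differentiability of the derivative. -/
lemma cd2 {f : ℝ → ℝ} {r : ℝ} (h : ContDiffAt ℝ 2 f r) :
    (∀ᶠ x in 𝓝 r, HasDerivAt f (deriv f x) x) ∧ DifferentiableAt ℝ (deriv f) r := by
  obtain ⟨u, hu, hcd⟩ := h.contDiffOn (m := 2) le_rfl (by simp)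
  obtain ⟨t, htu, hto, hrt⟩ := mem_nhds_iff.mp hu
  have hcd' : ContDiffOn ℝ 2 f t := hcd.mono htu
  have hdiff : ∀ x ∈ t, HasDerivAt f (deriv f x) x := by
    intro x hx
    have : DifferentiableAt ℝ f x :=
      ((hcd'.differentiableOn (by norm_num)) x hx).differentiableAt (hto.mem_nhds hx)
    exact this.hasDerivAt
  refine ⟨eventually_of_mem (hto.mem_nhds hrt) hdiff, ?_⟩
  have h11 : (1:WithTop ℕ∞) + 1 = 2 := by norm_num
  have hcd2 : ContDiffOn ℝ ((1:WithTop ℕ∞)+1) f t := by rw [h11]; exact hcd'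
  have h1 : ContDiffOn ℝ 1 (deriv f) t :=
    ((contDiffOn_succ_iff_deriv_of_isOpen hto).mp hcd2).2.2
  exact ((h1.differentiableOn one_ne_zero) r hrt).differentiableAt (hto.mem_nhds hrt)

/-- Compute `Lop` from explicit derivative data. -/
lemma Lop_val {n : ℕ} {γ ε : ℝ} {f f1 : ℝ → ℝ} {d r : ℝ}
    (hf : ∀ᶠ x in 𝓝 r, HasDerivAt f (f1 x) x) (h2 : HasDerivAt f1 d r) :
    Lop n γ ε f r = d + Bco n ε r * f1 r - Cco n γ ε r * f r := by
  have hev : deriv f =ᶠ[𝓝 r] f1 := hf.mono fun x hx => hx.deriv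
  rw [Lop_def, hev.deriv_eq, hev.self_of_nhds, h2.deriv]

/-- Second-derivative test: at an interior local max of a `C²` function, `f'' ≤ 0`. -/
lemma second_deriv_nonpos_of_localmax {f : ℝ → ℝ} {m : ℝ}
    (hf : ContDiffAt ℝ 2 f m) (hmax : IsLocalMax f m) :
    deriv (deriv f) m ≤ 0 := by
  by_contra hcon
  push_neg at hcon
  obtain ⟨hev, hdd⟩ := cd2 hf
  have hA : HasDerivAt (deriv f) (deriv (deriv f) m) m := hdd.hasDerivAt
  have hA0 : deriv f m = 0 := hmax.deriv_eq_zero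
  -- slope of deriv f tends to a positive number ⇒ deriv f > 0 just right of m
  have hslope := hasDerivAt_iff_tendsto_slope.mp hA
  have hpos : ∀ᶠ x in 𝓝[>] m, 0 < deriv f x := by
    have h1 : ∀ᶠ x in 𝓝[≠] m, 0 < slope (deriv f) m x := by
      apply hslope.eventually (eventually_gt_nhds hcon)
    have h2 : (𝓝[>] m) ≤ 𝓝[≠] m := nhdsWithin_mono _ fun x hx => ne_of_gt hx
    filter_upwards [h1.filter_mono h2, self_mem_nhdsWithin] with x hx hx'
    rw [slope_def_field, hA0, sub_zero] at hx
    have hxm : 0 < x - m := sub_pos.mpr hx'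
    have := mul_pos hx hxm
    rw [div_mul_cancel₀] at this
    · linarith
    · exact ne_of_gt hxm
  -- also f is continuous near m, so f is strictly increasing just right of m
  obtain ⟨δ, hδ, hδpos⟩ := (nhdsGT_basis m |>.eventually_iff.mp hpos)
  obtain ⟨u, hu, hucont⟩ := hf.contDiffOn (m := 1) (by norm_num) (by simp)
  obtain ⟨t, htu, hto, hmt⟩ := mem_nhds_iff.mp hu
  obtain ⟨δ', hδ'pos, hball⟩ := Metric.isOpen_iff.mp hto m hmt
  set b := min ((m + δ)/2) (m + δ'/2) with hb
  have hmb : m < b := by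
    apply lt_min (by linarith) (by linarith)
  have hcont : ContinuousOn f (Icc m b) := by
    apply ((hucont.mono htu).continuousOn).mono
    intro x hx
    apply hball
    rw [Metric.mem_ball, Real.dist_eq, abs_lt]
    constructor
    · have := hx.1; linarith
    · have := hx.2
      have : x ≤ m + δ'/2 := le_trans this (min_le_right _ _)
      linarith
  have hmono : StrictMonoOn f (Icc m b) := by
    apply strictMonoOn_of_deriv_pos (convex_Icc m b) hcont
    intro x hx
    rw [interior_Icc] at hx
    apply hδpos
    constructor
    · exact hx.1
    · have := hx.2
      have hbb : b ≤ (m + δ)/2 := min_le_left _ _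
      linarith
  have h1 : f m < f b := hmono (left_mem_Icc.mpr hmb.le) (right_mem_Icc.mpr hmb.le) hmb
  -- but local max: eventually f x ≤ f m
  have h2 : ∀ᶠ x in 𝓝 m, f x ≤ f m := hmax
  -- pick a point in (m, b] where both apply:
  obtain ⟨δ'', hδ''pos, hballs⟩ := Metric.eventually_nhds_iff_ball.mp h2
  set p := min b (m + δ''/2) with hp
  have hmp : m < p := lt_min hmb (by linarith)
  have hpb : p ≤ b := min_le_left _ _
  have h3 : f m < f p := by
    rcases eq_or_lt_of_le hpb with he | hl
    · rw [he]; exact h1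
    · exact hmono (left_mem_Icc.mpr hmb.le) ⟨hmp.le, hpb⟩ hmp
  have h4 : f p ≤ f m := by
    apply hballs
    rw [Metric.mem_ball, Real.dist_eq, abs_lt]
    have : p ≤ m + δ''/2 := min_le_right _ _
    constructor <;> [linarith; linarith]
  linarith

end helpers
section maxprinciple

variable {n : ℕ} {γ ε : ℝ} (hn : 2 ≤ n) (hγ : 1 < γ) (hε : 0 < ε)

include hn hγ hε in
/-- Weak maximum principle: `Lw ≥ 0` on `(x,y)`, `w ≤ 0` at endpoints ⇒ `w ≤ 0`. -/
lemma MP1 {w : ℝ → ℝ} {x y : ℝ} (hxy : x < y)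
    (hcont : ContinuousOn w (Icc x y))
    (hC2 : ∀ r ∈ Ioo x y, ContDiffAt ℝ 2 w r)
    (hsub : ∀ r ∈ Ioo x y, 0 ≤ Lop n γ ε w r)
    (hwx : w x ≤ 0) (hwy : w y ≤ 0) :
    ∀ r ∈ Icc x y, w r ≤ 0 := by
  by_contra hcon
  push_neg at hcon
  obtain ⟨r0, hr0, hr0pos⟩ := hcon
  obtain ⟨m, hm, hmax⟩ := isCompact_Icc.exists_isMaxOn (nonempty_Icc.mpr hxy.le)
    hcont
  have hwm : 0 < w m := lt_of_lt_of_le hr0pos (hmax hr0)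
  have hmint : m ∈ Ioo x y := by
    rcases eq_or_lt_of_le hm.1 with he | hl
    · exfalso; rw [← he] at hwm; linarith
    rcases eq_or_lt_of_le hm.2 with he | hl2
    · exfalso; rw [he] at hwm; linarith
    exact ⟨hl, hl2⟩
  have hloc : IsLocalMax w m := hmax.isLocalMax (Icc_mem_nhds hmint.1 hmint.2)
  have hd1 : deriv w m = 0 := hloc.deriv_eq_zero
  have hd2 : deriv (deriv w) m ≤ 0 := second_deriv_nonpos_of_localmax (hC2 m hmint) hloc
  have hL := hsub m hmint
  rw [Lop_def, hd1, mul_zero, add_zero] at hL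
  have hc := Cco_pos hn hγ hε (n := n) (γ := γ) (ε := ε) m
  nlinarith

include hn hγ hε in
/-- Strict maximum principle: `Lw > 0` on `(x,y)`, `w ≤ 0` at endpoints ⇒ `w < 0` inside. -/
lemma MP2 {w : ℝ → ℝ} {x y : ℝ} (hxy : x < y)
    (hcont : ContinuousOn w (Icc x y))
    (hC2 : ∀ r ∈ Ioo x y, ContDiffAt ℝ 2 w r)
    (hsub : ∀ r ∈ Ioo x y, 0 < Lop n γ ε w r)
    (hwx : w x ≤ 0) (hwy : w y ≤ 0) :
    ∀ r ∈ Ioo x y, w r < 0 := by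
  have hle := MP1 hn hγ hε hxy hcont hC2 (fun r hr => (hsub r hr).le) hwx hwy
  intro r hr
  rcases lt_or_ge (w r) 0 with h | h
  · exact h
  have hw0 : w r = 0 := le_antisymm (hle r (Ioo_subset_Icc_self hr)) h
  -- r is an interior max
  have hmax : IsLocalMax w r := by
    have : IsMaxOn w (Icc x y) r := by
      intro z hz
      simp only [mem_setOf_eq, hw0]
      exact hle z hz
    exact this.isLocalMax (Icc_mem_nhds hr.1 hr.2)
  have hd1 : deriv w r = 0 := hmax.deriv_eq_zero
  have hd2 : deriv (deriv w) r ≤ 0 := second_deriv_nonpos_of_localmax (hC2 r hr) hmax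
  have hL := hsub r hr
  rw [Lop_def, hd1, hw0, mul_zero, mul_zero, add_zero, sub_zero] at hL
  linarith

end maxprinciple
section barriers

variable {n : ℕ} {γ ε : ℝ} (hn : 2 ≤ n) (hγ : 1 < γ) (hε : 0 < ε)

include hn hγ hε in
lemma Lop_id {r : ℝ} (hr : r ∈ Ioo (0:ℝ) 1) :
    Lop n γ ε (fun x => x) r = 2*r*(γ-1)/(γ*(ε + r^2)) ∧
      0 < Lop n γ ε (fun x => x) r := by
  have hr0 : 0 < r := hr.1
  have hs : 0 < ε + r^2 := by positivity
  have hγ0 : 0 < γ := by linarith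
  have hL : Lop n γ ε (fun x => x) r = 0 + Bco n ε r * 1 - Cco n γ ε r * r := by
    apply Lop_val (f1 := fun _ => (1:ℝ))
    · filter_upwards with x using hasDerivAt_id' x
    · exact hasDerivAt_const r 1
  have he : Lop n γ ε (fun x => x) r = 2*r*(γ-1)/(γ*(ε + r^2)) := by
    rw [hL]; unfold Bco Cco
    field_simp
    ring
  refine ⟨he, ?_⟩
  rw [he]
  have : 0 < 2*r*(γ-1) := by nlinarith
  positivity

include hn hγ hε in
lemma Lop_rpow {r : ℝ} (hr : r ∈ Ioo (0:ℝ) 1) :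
    Lop n γ ε (fun x => x ^ alphaN n γ) r < 0 := by
  have hr0 : 0 < r := hr.1
  have hrne : r ≠ 0 := ne_of_gt hr0
  have hs : 0 < ε + r^2 := by positivity
  have hsne : ε + r^2 ≠ 0 := ne_of_gt hs
  have hγ0 : 0 < γ := by linarith
  have hγne : γ ≠ 0 := ne_of_gt hγ0
  set α := alphaN n γ with hαdef
  have hq : α^2 + ((n:ℝ)-1) * α = (n:ℝ) - 2 + 2/γ := alpha_quad hn hγ
  have hai : 1/γ < α := alpha_gt_inv hn hγ
  clear_value α
  have hL : Lop n γ ε (fun x => x ^ α) r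
      = α * ((α - 1) * r ^ (α - 2)) + Bco n ε r * (α * r ^ (α-1))
        - Cco n γ ε r * r ^ α := by
    apply Lop_val (f1 := fun x => α * x ^ (α - 1))
    · filter_upwards [Ioi_mem_nhds hr0] with x hx
      exact Real.hasDerivAt_rpow_const (Or.inl (ne_of_gt hx))
    · have h := (Real.hasDerivAt_rpow_const (p := α - 1) (Or.inl hrne)).const_mul α
      have he : α - 1 - 1 = α - 2 := by ring
      rw [he] at h
      exact h
  have e1 : r ^ (α - 1) = r ^ (α-2) * r := by
    have h' : α - 1 = (α - 2) + 1 := by ring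
    rw [h', Real.rpow_add_one hrne]
  have e2 : r ^ α = r ^ (α-2) * r^2 := by
    have h' : α = (α - 2) + (1 + 1) := by ring
    rw [h', Real.rpow_add hr0, Real.rpow_add hr0, Real.rpow_one]
    ring
  have hX : 0 < r ^ (α - 2) := Real.rpow_pos_of_pos hr0 _
  have key : α*(α-1) + ((n:ℝ)-2)*α - ((n:ℝ)-2) = 2/γ - 2*α := by nlinarith [hq]
  have step1 : Lop n γ ε (fun x => x ^ α) r
      = (α*(α-1) + ((n:ℝ)-2)*α - ((n:ℝ)-2)) * r ^ (α-2)
        + 2*(α - 1/γ) * r ^ (α-2) * r^2 / (ε + r^2) := by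
    rw [hL, e1, e2]; unfold Bco Cco
    field_simp
    ring
  rw [step1, key]
  have he : (2/γ - 2*α) * r ^ (α-2) + 2*(α - 1/γ) * r ^ (α-2) * r^2 / (ε + r^2)
      = -((2*α - 2/γ) * ε * r ^ (α-2) / (ε + r^2)) := by
    field_simp
    ring
  rw [he]
  have h2γ : 2/γ = 2*(1/γ) := by ring
  have h1 : 0 < 2*α - 2/γ := by rw [h2γ]; linarith
  have h2 : 0 < (2*α - 2/γ) * ε * r ^ (α-2) / (ε + r^2) := by positivity
  linarith

include hn hγ hε in
lemma Lop_cubic {r : ℝ} (hr : r ∈ Ioo (0:ℝ) 1) {A : ℝ} (hA : 0 < A) :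
    Lop n γ ε (fun x => A * (x - (1 + 1/ε) * x^3)) r < 0 := by
  have hr0 : 0 < r := hr.1
  have hr1 : r < 1 := hr.2
  have hrne : r ≠ 0 := ne_of_gt hr0
  have hs : 0 < ε + r^2 := by positivity
  have hγ0 : 0 < γ := by linarith
  have hγne : γ ≠ 0 := ne_of_gt hγ0
  have hnn : (2:ℝ) ≤ (n:ℝ) := by exact_mod_cast hn
  have hεi : 0 < 1/ε := by positivity
  set M := 1 + 1/ε with hM
  have hM1 : 1/ε ≤ M := by rw [hM]; linarith
  have hM0 : 0 < M := by rw [hM]; linarith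
  clear_value M
  have hL : Lop n γ ε (fun x => A * (x - M * x^3)) r
      = A * (0 - M * (3*((2:ℕ) * r^1))) + Bco n ε r * (A * (1 - M * (3*r^2)))
        - Cco n γ ε r * (A * (r - M * r^3)) := by
    apply Lop_val (f1 := fun x => A * (1 - M * (3*x^2)))
    · filter_upwards with x
      have h0 := ((hasDerivAt_id' x).sub (((hasDerivAt_pow 3 x)).const_mul M)).const_mul A
      have hv : A * (1 - M * (3*x^2)) = A * (1 - M * ((3:ℕ) * x ^ (3-1))) := by
        push_cast; ring
      rw [hv]; exact h0
    · exact ((hasDerivAt_const r (1:ℝ)).sub (((hasDerivAt_pow 2 r).const_mul 3).const_mul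
        M)).const_mul A
  have he : Lop n γ ε (fun x => A * (x - M * x^3)) r
      = A * (2*r*(γ-1)/(γ*(ε+r^2)) - M*(2*(n:ℝ)+2)*r - M*(6 - 2/γ)*r^3/(ε+r^2)) := by
    rw [hL]; unfold Bco Cco
    push_cast
    field_simp
    ring
  rw [he]
  apply mul_neg_of_pos_of_neg hA
  have b1 : 2*r*(γ-1)/(γ*(ε+r^2)) < 2*r/ε := by
    rw [div_lt_div_iff₀ (by positivity) hε]
    nlinarith [mul_pos hr0 hε, mul_pos hγ0 (mul_pos hr0 (mul_pos hr0 hr0))]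
  have b2 : 6*r/ε ≤ M*(2*(n:ℝ)+2)*r := by
    have h6 : (6:ℝ) ≤ 2*(n:ℝ)+2 := by linarith
    have c1 : (1/ε)*6 ≤ (1/ε)*(2*(n:ℝ)+2) := mul_le_mul_of_nonneg_left h6 hεi.le
    have c2 : (1/ε)*(2*(n:ℝ)+2) ≤ M*(2*(n:ℝ)+2) := by
      apply mul_le_mul_of_nonneg_right hM1 (by linarith)
    have c3 : (1/ε)*6*r ≤ M*(2*(n:ℝ)+2)*r := by
      apply mul_le_mul_of_nonneg_right _ hr0.le
      linarith
    calc 6*r/ε = (1/ε)*6*r := by ring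
    _ ≤ _ := c3
  have h2γ : 2/γ < 2 := by rw [div_lt_iff₀ hγ0]; linarith
  have b3 : 0 < M*(6 - 2/γ)*r^3/(ε+r^2) :=
    div_pos (mul_pos (mul_pos hM0 (by linarith)) (by positivity)) hs
  have b4 : 2*r/ε < 6*r/ε := by
    rw [div_lt_div_iff₀ hε hε]
    nlinarith [mul_pos hr0 hε]
  linarith

end barriers
section globalexist

open scoped NNReal

lemma hasDerivWithinAt_singleton' (f : ℝ → ℝ × ℝ) (x : ℝ) (c : ℝ × ℝ) :
    HasDerivWithinAt f c {x} x := by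
  rw [hasDerivWithinAt_iff_tendsto_slope, diff_self, nhdsWithin_empty]
  exact tendsto_bot

variable {F : ℝ → ℝ × ℝ → ℝ × ℝ} {a : ℝ} {K : ℝ≥0}

lemma PL_step (ha : 0 < a)
    (hlip : ∀ r ∈ Icc a 1, LipschitzWith K (F r))
    (hcont : ∀ y, ContinuousOn (fun r => F r y) (Icc a 1))
    (hF0 : ∀ r ∈ Icc a 1, F r 0 = 0)
    {s : ℝ} (hs : s ∈ Icc a 1) (x₀ : ℝ × ℝ) :
    ∃ g : ℝ → ℝ × ℝ, g s = x₀ ∧ ∀ r ∈ Icc (max a (s - 1/(2*(K:ℝ)+2))) s,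
      HasDerivWithinAt g (F r (g r)) (Icc (max a (s - 1/(2*(K:ℝ)+2))) s) r := by
  have hK : (0:ℝ) ≤ (K:ℝ) := K.coe_nonneg
  set τ : ℝ := 1/(2*(K:ℝ)+2) with hτdef
  have hτ : 0 < τ := by positivity
  set tMin : ℝ := max a (s - τ) with htMin
  have htMa : a ≤ tMin := le_max_left _ _
  have htMs : tMin ≤ s := max_le hs.1 (by linarith)
  have hsub : Icc tMin s ⊆ Icc a 1 := Icc_subset_Icc htMa hs.2
  have hpl : IsPicardLindelof F (tmin := tMin) (tmax := s) ⟨s, htMs, le_rfl⟩ x₀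
      ⟨‖x₀‖ + 1, by positivity⟩ 0 ⟨(2*(K:ℝ)+2)*(‖x₀‖+1), by positivity⟩ K := by
    constructor
    · intro t ht
      exact (hlip t (hsub ht)).lipschitzOnWith
    · intro y _
      exact (hcont y).mono hsub
    · intro t ht x hx
      change ‖F t x‖ ≤ (2*(K:ℝ)+2)*(‖x₀‖+1)
      change x ∈ Metric.closedBall x₀ (‖x₀‖ + 1) at hx
      have h1 : dist (F t x) (F t 0) ≤ (K:ℝ) * dist x 0 := (hlip t (hsub ht)).dist_le_mul x 0
      rw [hF0 t (hsub ht), dist_zero_right, dist_zero_right] at h1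
      have h2 : ‖x‖ ≤ ‖x₀‖ + (‖x₀‖ + 1) := by
        have := mem_closedBall_iff_norm.mp hx
        have h3 : ‖x‖ ≤ ‖x₀‖ + ‖x - x₀‖ := norm_le_insert' x x₀
        linarith
      have h4 : (K:ℝ) * ‖x‖ ≤ (K:ℝ) * (2*‖x₀‖ + 1) := by
        apply mul_le_mul_of_nonneg_left _ hK
        linarith
      have h5 : (K:ℝ) * (2*‖x₀‖ + 1) ≤ (2*(K:ℝ)+2)*(‖x₀‖+1) := by
        nlinarith [norm_nonneg x₀]
      linarith
    · change (2*(K:ℝ)+2)*(‖x₀‖+1) * max (s - s) (s - tMin) ≤ (‖x₀‖+1) - ((0:ℝ≥0):ℝ)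
      rw [NNReal.coe_zero, sub_zero]
      have hmax : max (s - s) (s - tMin) = s - tMin := by
        rw [max_eq_right]; linarith
      rw [hmax]
      have h1 : s - tMin ≤ τ := by
        have : s - τ ≤ tMin := le_max_right _ _
        linarith
      have h2 : (2*(K:ℝ)+2)*(‖x₀‖+1) * (s - tMin) ≤ (2*(K:ℝ)+2)*(‖x₀‖+1) * τ := by
        apply mul_le_mul_of_nonneg_left h1
        positivity
      have h3 : (2*(K:ℝ)+2)*(‖x₀‖+1) * τ = ‖x₀‖+1 := by
        rw [hτdef]
        field_simp
      linarith
  obtain ⟨g, hg1, hg2⟩ := hpl.exists_eq_forall_mem_Icc_hasDerivWithinAt₀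
  exact ⟨g, hg1, hg2⟩

lemma PL_chain (ha : 0 < a)
    (hlip : ∀ r ∈ Icc a 1, LipschitzWith K (F r))
    (hcont : ∀ y, ContinuousOn (fun r => F r y) (Icc a 1))
    (hF0 : ∀ r ∈ Icc a 1, F r 0 = 0) (m : ℕ) :
    ∀ s ∈ Icc a 1, ∀ x₀ : ℝ × ℝ, ∃ g : ℝ → ℝ × ℝ, g s = x₀ ∧
      ∀ r ∈ Icc (max a (s - m * (1/(2*(K:ℝ)+2)))) s,
        HasDerivWithinAt g (F r (g r)) (Icc (max a (s - m * (1/(2*(K:ℝ)+2)))) s) r := by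
  have hK : (0:ℝ) ≤ (K:ℝ) := K.coe_nonneg
  set τ : ℝ := 1/(2*(K:ℝ)+2) with hτdef
  have hτ : 0 < τ := by positivity
  induction m with
  | zero =>
    intro s hs x₀
    refine ⟨fun _ => x₀, rfl, ?_⟩
    have he : max a (s - (0:ℕ) * τ) = s := by
      push_cast
      rw [zero_mul, sub_zero, max_eq_right hs.1]
    rw [he, Icc_self]
    intro r hr
    rw [mem_singleton_iff] at hr
    subst hr
    exact hasDerivWithinAt_singleton' _ _ _
  | succ m IH =>
    intro s hs x₀
    obtain ⟨f, hf1, hf2⟩ := IH s hs x₀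
    rcases le_or_gt (s - m * τ) a with hcase | hcase
    · -- already reached a; same function works
      have he1 : max a (s - m * τ) = a := max_eq_left hcase
      have he2 : max a (s - (m+1) * τ) = a := by
        apply max_eq_left
        have : s - (m+1) * τ ≤ s - m * τ := by
          have : (m:ℝ) * τ ≤ (m+1) * τ := by nlinarith
          linarith
        linarith
      refine ⟨f, hf1, ?_⟩
      have he2' : max a (s - ((m:ℕ)+1 : ℕ) * τ) = a := by push_cast; push_cast at he2; exact he2
      rw [he2', ← he1]
      exact hf2
    · -- extend by one PL step
      set s1 : ℝ := s - m * τ with hs1def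
      have he1 : max a (s - m * τ) = s1 := max_eq_right hcase.le
      have hmτ : 0 ≤ (m:ℝ) * τ := by positivity
      have hs1s : s1 ≤ s := by rw [hs1def]; linarith
      have hs1 : s1 ∈ Icc a 1 := ⟨hcase.le, le_trans hs1s hs.2⟩
      obtain ⟨g, hg1, hg2⟩ := PL_step ha hlip hcont hF0 hs1 (f s1)
      rw [← hτdef] at hg2
      set s2 : ℝ := max a (s1 - τ) with hs2def
      have he2 : max a (s - (m+1) * τ) = s2 := by
        rw [hs2def, hs1def]
        congr 1
        push_cast
        ring
      have hs2s1 : s2 ≤ s1 := max_le hs1.1 (by linarith)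
      have hficc : ∀ r ∈ Icc s1 s, HasDerivWithinAt f (F r (f r)) (Icc s1 s) r := by
        rw [← he1]; exact hf2
      set comb : ℝ → ℝ × ℝ := fun r => if r < s1 then g r else f r with hcomb
      have hagree_g : ∀ y ∈ Icc s2 s1, comb y = g y := by
        intro y hy
        rcases lt_or_eq_of_le hy.2 with h | h
        · simp [hcomb, h]
        · simp [hcomb, h, hg1]
      have hagree_f : ∀ y ∈ Icc s1 s, comb y = f y := by
        intro y hy
        have : ¬ (y < s1) := not_lt.mpr hy.1
        simp [hcomb, this]
      have hcs : comb s = x₀ := by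
        rw [hagree_f s ⟨hs1s, le_rfl⟩, hf1]
      refine ⟨comb, hcs, ?_⟩
      have he2' : max a (s - ((m:ℕ)+1 : ℕ) * τ) = s2 := by push_cast; push_cast at he2; exact he2
      rw [he2']
      have hIccU : Icc s2 s1 ∪ Icc s1 s = Icc s2 s :=
        Icc_union_Icc_eq_Icc hs2s1 hs1s
      intro r hr
      rcases lt_trichotomy r s1 with h | h | h
      · -- left piece
        have hrmem : r ∈ Icc s2 s1 := ⟨hr.1, h.le⟩
        have hd := (hg2 r hrmem).congr hagree_g (hagree_g r hrmem)
        have hval : comb r = g r := hagree_g r hrmem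
        rw [← hval] at hd
        apply hd.mono_of_mem_nhdsWithin
        apply Filter.mem_of_superset (inter_mem_nhdsWithin (Icc s2 s) (Iio_mem_nhds h))
        intro y hy
        exact ⟨hy.1.1, hy.2.le⟩
      · -- junction
        have hm1 : r ∈ Icc s2 s1 := ⟨hr.1, h.le⟩
        have hm2 : r ∈ Icc s1 s := ⟨h.ge, hr.2⟩
        have hd1 := (hg2 r hm1).congr hagree_g (hagree_g r hm1)
        have hd2 := (hficc r hm2).congr hagree_f (hagree_f r hm2)
        have hval1 : comb r = g r := hagree_g r hm1
        rw [← hval1] at hd1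
        have hval2 : comb r = f r := hagree_f r hm2
        rw [← hval2] at hd2
        have hu := hd1.union hd2
        rwa [hIccU] at hu
      · -- right piece
        have hrmem : r ∈ Icc s1 s := ⟨h.le, hr.2⟩
        have hd := (hficc r hrmem).congr hagree_f (hagree_f r hrmem)
        have hval : comb r = f r := hagree_f r hrmem
        rw [← hval] at hd
        apply hd.mono_of_mem_nhdsWithin
        apply Filter.mem_of_superset (inter_mem_nhdsWithin (Icc s2 s) (Ioi_mem_nhds h))
        intro y hy
        exact ⟨hy.2.le, hy.1.2⟩

/-- Global existence on `[a,1]` with initial data at the right endpoint `1`. -/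
lemma PL_global (ha : 0 < a) (ha1 : a < 1)
    (hlip : ∀ r ∈ Icc a 1, LipschitzWith K (F r))
    (hcont : ∀ y, ContinuousOn (fun r => F r y) (Icc a 1))
    (hF0 : ∀ r ∈ Icc a 1, F r 0 = 0) (x₀ : ℝ × ℝ) :
    ∃ g : ℝ → ℝ × ℝ, g 1 = x₀ ∧
      ∀ r ∈ Icc a 1, HasDerivWithinAt g (F r (g r)) (Icc a 1) r := by
  have hK : (0:ℝ) ≤ (K:ℝ) := K.coe_nonneg
  set τ : ℝ := 1/(2*(K:ℝ)+2) with hτdef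
  have hτ : 0 < τ := by positivity
  obtain ⟨m, hm⟩ := exists_nat_ge ((1-a)/τ)
  have hma : 1 - m * τ ≤ a := by
    rw [div_le_iff₀ hτ] at hm
    linarith
  obtain ⟨g, hg1, hg2⟩ := PL_chain ha hlip hcont hF0 m 1 ⟨ha1.le, le_rfl⟩ x₀
  rw [← hτdef, max_eq_left hma] at hg2
  exact ⟨g, hg1, hg2⟩

end globalexist
section system

open scoped NNReal

/-- The first-order system vector field for `Lh = 0`. -/
def Fv (n : ℕ) (γ ε : ℝ) : ℝ → ℝ × ℝ → ℝ × ℝ :=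
  fun r y => (y.2, Cco n γ ε r * y.1 - Bco n ε r * y.2)

variable {n : ℕ} {γ ε : ℝ} (hn : 2 ≤ n) (hγ : 1 < γ) (hε : 0 < ε)

include hn hγ hε in
lemma Bco_bound {a r : ℝ} (ha : 0 < a) (hr : r ∈ Icc a 1) :
    |Bco n ε r| ≤ ((n:ℝ)-2)/a + 2/ε := by
  have hra : a ≤ r := hr.1
  have hr0 : 0 < r := lt_of_lt_of_le ha hra
  have hr1 : r ≤ 1 := hr.2
  have hnn : (2:ℝ) ≤ (n:ℝ) := by exact_mod_cast hn
  have h1 : 0 ≤ ((n:ℝ)-2)/r := div_nonneg (by linarith) hr0.le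
  have h2 : 0 ≤ 2*r/(ε + r^2) := by positivity
  have hb1 : ((n:ℝ)-2)/r ≤ ((n:ℝ)-2)/a := by
    apply div_le_div_of_nonneg_left (by linarith) ha hra
  have hb2 : 2*r/(ε + r^2) ≤ 2/ε := by
    rw [div_le_div_iff₀ (by positivity) hε]
    nlinarith [sq_nonneg r, mul_pos hr0 hr0]
  rw [Bco, abs_of_nonneg (by linarith)]
  linarith

include hn hγ hε in
lemma Cco_bound {a r : ℝ} (ha : 0 < a) (hr : r ∈ Icc a 1) :
    |Cco n γ ε r| ≤ ((n:ℝ)-2)/a^2 + 2/(γ*ε) := by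
  have hra : a ≤ r := hr.1
  have hr0 : 0 < r := lt_of_lt_of_le ha hra
  have hnn : (2:ℝ) ≤ (n:ℝ) := by exact_mod_cast hn
  have hγ0 : (0:ℝ) < γ := by linarith
  have h1 : 0 ≤ ((n:ℝ)-2)/r^2 := div_nonneg (by linarith) (by positivity)
  have h2 : 0 ≤ 2/(γ*(ε + r^2)) := by positivity
  have hb1 : ((n:ℝ)-2)/r^2 ≤ ((n:ℝ)-2)/a^2 := by
    apply div_le_div_of_nonneg_left (by linarith) (by positivity)
    nlinarith
  have hb2 : 2/(γ*(ε + r^2)) ≤ 2/(γ*ε) := by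
    apply div_le_div_of_nonneg_left (by norm_num) (by positivity)
    nlinarith [sq_nonneg r]
  rw [Cco, abs_of_nonneg (by linarith)]
  linarith

/-- Lipschitz constant for `Fv` on `[a,1]`. -/
def Kv (n : ℕ) (γ ε a : ℝ) : ℝ≥0 :=
  Real.toNNReal (1 + (((n:ℝ)-2)/a + 2/ε) + (((n:ℝ)-2)/a^2 + 2/(γ*ε)))

include hn hγ hε in
lemma Fv_lip {a : ℝ} (ha : 0 < a) :
    ∀ r ∈ Icc a 1, LipschitzWith (Kv n γ ε a) (Fv n γ ε r) := by
  intro r hr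
  have hnn : (2:ℝ) ≤ (n:ℝ) := by exact_mod_cast hn
  have hγ0 : (0:ℝ) < γ := by linarith
  set Mb := ((n:ℝ)-2)/a + 2/ε with hMb
  set Mc := ((n:ℝ)-2)/a^2 + 2/(γ*ε) with hMc
  have hMb0 : 0 ≤ Mb := by
    rw [hMb]
    have : 0 ≤ ((n:ℝ)-2)/a := div_nonneg (by linarith) ha.le
    have : 0 ≤ 2/ε := by positivity
    linarith
  have hMc0 : 0 ≤ Mc := by
    rw [hMc]
    have : 0 ≤ ((n:ℝ)-2)/a^2 := div_nonneg (by linarith) (by positivity)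
    have : 0 ≤ 2/(γ*ε) := by positivity
    linarith
  have hKv : ((Kv n γ ε a : ℝ≥0) : ℝ) = 1 + Mb + Mc := by
    rw [Kv, Real.coe_toNNReal _ (by rw [← hMb, ← hMc]; linarith)]
  apply LipschitzWith.of_dist_le_mul
  intro y y'
  rw [Prod.dist_eq, hKv]
  have hfst : dist y.1 y'.1 ≤ dist y y' := by
    rw [Prod.dist_eq]; exact le_max_left _ _
  have hsnd : dist y.2 y'.2 ≤ dist y y' := by
    rw [Prod.dist_eq]; exact le_max_right _ _
  have hd1 : dist (Fv n γ ε r y).1 (Fv n γ ε r y').1 ≤ dist y y' := by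
    simp only [Fv]
    exact hsnd
  have hd2 : dist (Fv n γ ε r y).2 (Fv n γ ε r y').2 ≤ (Mb + Mc) * dist y y' := by
    simp only [Fv, Real.dist_eq]
    have hBb : |Bco n ε r| ≤ Mb := Bco_bound hn hγ hε ha hr
    have hCb : |Cco n γ ε r| ≤ Mc := Cco_bound hn hγ hε ha hr
    have e1 : Cco n γ ε r * y.1 - Bco n ε r * y.2 - (Cco n γ ε r * y'.1 - Bco n ε r * y'.2)
        = Cco n γ ε r * (y.1 - y'.1) - Bco n ε r * (y.2 - y'.2) := by ring
    rw [e1]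
    have h3 : |Cco n γ ε r * (y.1 - y'.1) - Bco n ε r * (y.2 - y'.2)|
        ≤ |Cco n γ ε r| * |y.1 - y'.1| + |Bco n ε r| * |y.2 - y'.2| := by
      calc _ ≤ |Cco n γ ε r * (y.1 - y'.1)| + |Bco n ε r * (y.2 - y'.2)| := abs_sub _ _
      _ = _ := by rw [abs_mul, abs_mul]
    have h4 : |Cco n γ ε r| * |y.1 - y'.1| ≤ Mc * dist y y' := by
      apply mul_le_mul hCb _ (abs_nonneg _) hMc0
      rw [← Real.dist_eq]; exact hfst
    have h5 : |Bco n ε r| * |y.2 - y'.2| ≤ Mb * dist y y' := by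
      apply mul_le_mul hBb _ (abs_nonneg _) hMb0
      rw [← Real.dist_eq]; exact hsnd
    linarith
  have hdn : 0 ≤ dist y y' := dist_nonneg
  apply max_le
  · nlinarith
  · nlinarith

include hε in
lemma Fv_contOn {a : ℝ} (ha : 0 < a) (y : ℝ × ℝ) :
    ContinuousOn (fun r => Fv n γ ε r y) (Icc a 1) := by
  have hne : ∀ r ∈ Icc a 1, r ≠ 0 := fun r hr => ne_of_gt (lt_of_lt_of_le ha hr.1)
  have hne2 : ∀ r ∈ Icc a 1, r^2 ≠ 0 := fun r hr => pow_ne_zero 2 (hne r hr)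
  have hs : ∀ r ∈ Icc a 1, ε + r^2 ≠ 0 := fun r hr => ne_of_gt (by positivity)
  have hB : ContinuousOn (fun r => Bco n ε r) (Icc a 1) := by
    apply ContinuousOn.add
    · exact continuousOn_const.div continuousOn_id hne
    · exact (continuousOn_const.mul continuousOn_id).div
        (continuousOn_const.add (continuous_pow 2).continuousOn) hs
  have hC : ContinuousOn (fun r => Cco n γ ε r) (Icc a 1) := by
    apply ContinuousOn.add
    · exact continuousOn_const.div (continuous_pow 2).continuousOn hne2
    · rcases eq_or_ne γ 0 with hγ | hγ
      · simp [hγ]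
        exact continuousOn_const
      · apply continuousOn_const.div
          (continuousOn_const.mul (continuousOn_const.add (continuous_pow 2).continuousOn))
        intro r hr
        exact mul_ne_zero hγ (hs r hr)
  exact continuousOn_const.prodMk ((hC.mul continuousOn_const).sub (hB.mul continuousOn_const))

lemma Fv_zero (r : ℝ) : Fv n γ ε r 0 = 0 := by
  simp [Fv]

include hn hγ hε in
/-- Uniqueness of solutions of the system on `[a,1]` with data at `1`. -/
lemma sol_unique {a : ℝ} (ha : 0 < a) (ha1 : a < 1) {f g : ℝ → ℝ × ℝ}
    (hf : ∀ r ∈ Icc a 1, HasDerivWithinAt f (Fv n γ ε r (f r)) (Icc a 1) r)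
    (hg : ∀ r ∈ Icc a 1, HasDerivWithinAt g (Fv n γ ε r (g r)) (Icc a 1) r)
    (hfg : f 1 = g 1) : EqOn f g (Icc a 1) := by
  set cl : ℝ → ℝ := fun t => min (max t a) 1 with hcl
  have hclmem : ∀ t, cl t ∈ Icc a 1 := by
    intro t
    constructor
    · exact le_min (le_max_right t a) ha1.le
    · exact min_le_right _ _
  have hcleq : ∀ t ∈ Icc a 1, cl t = t := by
    intro t ht
    show min (max t a) 1 = t
    rw [max_eq_left ht.1, min_eq_left ht.2]
  set vcl : ℝ → ℝ × ℝ → ℝ × ℝ := fun t y => Fv n γ ε (cl t) y with hvcl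
  have hv : ∀ t, LipschitzOnWith (Kv n γ ε a) (vcl t) univ :=
    fun t => ((Fv_lip hn hγ hε ha) (cl t) (hclmem t)).lipschitzOnWith
  have derivconv : ∀ {p : ℝ → ℝ × ℝ},
      (∀ r ∈ Icc a 1, HasDerivWithinAt p (Fv n γ ε r (p r)) (Icc a 1) r) →
      ∀ t ∈ Ioc a 1, HasDerivWithinAt p (vcl t (p t)) (Iic t) t := by
    intro p hp t ht
    have hvclt : vcl t (p t) = Fv n γ ε t (p t) := by
      show Fv n γ ε (cl t) (p t) = _
      rw [hcleq t ⟨ht.1.le, ht.2⟩]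
    rw [hvclt]
    rcases lt_or_eq_of_le ht.2 with h1 | h1
    · exact ((hp t ⟨ht.1.le, ht.2⟩).hasDerivAt
        (Icc_mem_nhds ht.1 h1)).hasDerivWithinAt
    · have h2 := hp t ⟨ht.1.le, ht.2⟩
      apply h2.mono_of_mem_nhdsWithin
      apply Filter.mem_of_superset (inter_mem_nhdsWithin (Iic t) (Ioi_mem_nhds ht.1))
      intro y hy
      exact ⟨hy.2.le, le_trans hy.1 (le_of_eq h1)⟩
  have hfc : ContinuousOn f (Icc a 1) := fun r hr => (hf r hr).continuousWithinAt
  have hgc : ContinuousOn g (Icc a 1) := fun r hr => (hg r hr).continuousWithinAt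
  exact ODE_solution_unique_of_mem_Icc_left (fun t _ => hv t) hfc (derivconv hf) (fun _ _ => mem_univ _)
    hgc (derivconv hg) (fun _ _ => mem_univ _) hfg

include hn hγ hε in
/-- Global solution of the system on `(0,1]` with data at `1`. -/
lemma exists_glob (x₀ : ℝ × ℝ) :
    ∃ f : ℝ → ℝ × ℝ, f 1 = x₀ ∧ (∀ r ∈ Ioo (0:ℝ) 1, HasDerivAt f (Fv n γ ε r (f r)) r) ∧
      HasDerivWithinAt f (Fv n γ ε 1 (f 1)) (Icc (1/2) 1) 1 := by
  have hex : ∀ k : ℕ, ∃ g : ℝ → ℝ × ℝ, g 1 = x₀ ∧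
      ∀ r ∈ Icc (1/((k:ℝ)+2)) 1, HasDerivWithinAt g (Fv n γ ε r (g r)) (Icc (1/((k:ℝ)+2)) 1) r := by
    intro k
    have hak : (0:ℝ) < 1/((k:ℝ)+2) := by positivity
    have hak1 : 1/((k:ℝ)+2) < 1 := by
      rw [div_lt_one (by positivity)]
      have : (0:ℝ) ≤ (k:ℝ) := Nat.cast_nonneg k
      linarith
    exact PL_global hak hak1 (Fv_lip hn hγ hε hak) (Fv_contOn hε hak)
      (fun r _ => Fv_zero r) x₀
  choose sol hsol1 hsol2 using hex
  have hsub : ∀ k j : ℕ, k ≤ j → (1/((j:ℝ)+2)) ≤ 1/((k:ℝ)+2) := by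
    intro k j hkj
    apply div_le_div_of_nonneg_left one_pos.le (by positivity)
    have : (k:ℝ) ≤ (j:ℝ) := Nat.cast_le.mpr hkj
    linarith
  have hcons : ∀ k j : ℕ, k ≤ j → EqOn (sol k) (sol j) (Icc (1/((k:ℝ)+2)) 1) := by
    intro k j hkj
    have hak : (0:ℝ) < 1/((k:ℝ)+2) := by positivity
    have hak1 : 1/((k:ℝ)+2) < 1 := by
      rw [div_lt_one (by positivity)]
      have : (0:ℝ) ≤ (k:ℝ) := Nat.cast_nonneg k
      linarith
    apply sol_unique hn hγ hε hak hak1 (hsol2 k)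
    · intro r hr
      have hrj : r ∈ Icc (1/((j:ℝ)+2)) 1 := ⟨le_trans (hsub k j hkj) hr.1, hr.2⟩
      exact (hsol2 j r hrj).mono (Icc_subset_Icc (hsub k j hkj) le_rfl)
    · rw [hsol1 k, hsol1 j]
  set f : ℝ → ℝ × ℝ := fun r => sol ⌈1/r⌉₊ r with hf
  have hmem : ∀ r ∈ Ioc (0:ℝ) 1, r ∈ Icc (1/((⌈1/r⌉₊:ℝ)+2)) 1 := by
    intro r hr
    have hr0 : 0 < r := hr.1
    constructor
    · rw [div_le_iff₀ (by positivity)]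
      have h1 : 1/r ≤ (⌈1/r⌉₊:ℝ) := Nat.le_ceil _
      have h2 : 1/r ≤ (⌈1/r⌉₊:ℝ) + 2 := by linarith
      rw [div_le_iff₀ hr0] at h2
      linarith
    · exact hr.2
  have hagree : ∀ k : ℕ, ∀ r ∈ Icc (1/((k:ℝ)+2)) 1, f r = sol k r := by
    intro k r hr
    have hr0 : 0 < r := lt_of_lt_of_le (by positivity) hr.1
    have hrIoc : r ∈ Ioc (0:ℝ) 1 := ⟨hr0, hr.2⟩
    set N := ⌈1/r⌉₊ with hN
    rcases le_total k N with hkN | hkN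
    · rw [hf]
      simp only
      rw [← hN, hcons k N hkN hr]
    · rw [hf]
      simp only
      rw [← hN, hcons N k hkN (hmem r hrIoc)]
  have hm01 : (1:ℝ) ∈ Icc (1/(((0:ℕ):ℝ)+2)) 1 := by norm_num
  have hone : f 1 = x₀ := by
    rw [hagree 0 1 hm01]
    exact hsol1 0
  refine ⟨f, hone, ?_, ?_⟩
  · intro r hr
    have hr0 : 0 < r := hr.1
    have hr1 : r < 1 := hr.2
    -- choose k with 1/(k+2) < r
    obtain ⟨k, hk⟩ := exists_nat_gt (1/r)
    have hak : 1/((k:ℝ)+2) < r := by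
      rw [div_lt_iff₀ (by positivity)]
      rw [div_lt_iff₀ hr0] at hk
      nlinarith
    have hopen : Ioo (1/((k:ℝ)+2)) 1 ∈ 𝓝 r := Ioo_mem_nhds hak hr1
    have hev : f =ᶠ[𝓝 r] sol k := by
      filter_upwards [hopen] with y hy
      exact hagree k y ⟨hy.1.le, hy.2.le⟩
    have hd : HasDerivAt (sol k) (Fv n γ ε r (sol k r)) r := by
      apply (hsol2 k r ⟨hak.le, hr1.le⟩).hasDerivAt
      exact Filter.mem_of_superset hopen Ioo_subset_Icc_self
    have := hd.congr_of_eventuallyEq hev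
    rwa [hagree k r ⟨hak.le, hr1.le⟩]
  · have hd := hsol2 0 1 hm01
    have hset : Icc (1/(((0:ℕ):ℝ)+2)) 1 = Icc (1/2:ℝ) 1 := by norm_num
    rw [hset] at hd
    have hagree' : ∀ y ∈ Icc (1/2:ℝ) 1, f y = sol 0 y := by
      intro y hy
      apply hagree 0
      rw [hset]
      exact hy
    have hD := hd.congr hagree' (hagree' 1 (by norm_num))
    rwa [← hagree' 1 (by norm_num)] at hD
end system
section syslemmas

variable {n : ℕ} {γ ε : ℝ} (hn : 2 ≤ n) (hγ : 1 < γ) (hε : 0 < ε)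

/-- Solution pair predicate on `(0,1)`. -/
def IsSys (n : ℕ) (γ ε : ℝ) (h v : ℝ → ℝ) : Prop :=
  ∀ r ∈ Ioo (0:ℝ) 1, HasDerivAt h (v r) r ∧
    HasDerivAt v (Cco n γ ε r * h r - Bco n ε r * v r) r

include hε in
lemma BC_contOn : ContinuousOn (fun r => Bco n ε r) (Ioo (0:ℝ) 1) ∧
    ContinuousOn (fun r => Cco n γ ε r) (Ioo (0:ℝ) 1) := by
  have hne : ∀ r ∈ Ioo (0:ℝ) 1, r ≠ 0 := fun r hr => ne_of_gt hr.1
  have hne2 : ∀ r ∈ Ioo (0:ℝ) 1, r^2 ≠ 0 := fun r hr => pow_ne_zero 2 (hne r hr)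
  have hs : ∀ r ∈ Ioo (0:ℝ) 1, ε + r^2 ≠ 0 := fun r hr => ne_of_gt (by positivity)
  constructor
  · apply ContinuousOn.add
    · exact continuousOn_const.div continuousOn_id hne
    · exact (continuousOn_const.mul continuousOn_id).div
        (continuousOn_const.add (continuous_pow 2).continuousOn) hs
  · apply ContinuousOn.add
    · exact continuousOn_const.div (continuous_pow 2).continuousOn hne2
    · rcases eq_or_ne γ 0 with hγ' | hγ'
      · simp [hγ']
        exact continuousOn_const
      · apply continuousOn_const.div
          (continuousOn_const.mul (continuousOn_const.add (continuous_pow 2).continuousOn))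
        intro r hr
        exact mul_ne_zero hγ' (hs r hr)

include hε in
lemma sys_smooth {h v : ℝ → ℝ} (hs : IsSys n γ ε h v) :
    (∀ r ∈ Ioo (0:ℝ) 1, ContDiffAt ℝ 2 h r) ∧ (∀ r ∈ Ioo (0:ℝ) 1, Lop n γ ε h r = 0) ∧
      (∀ r ∈ Ioo (0:ℝ) 1, deriv h r = v r) := by
  have hO : IsOpen (Ioo (0:ℝ) 1) := isOpen_Ioo
  have hhc : ContinuousOn h (Ioo (0:ℝ) 1) :=
    fun r hr => ((hs r hr).1.differentiableAt.continuousAt).continuousWithinAt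
  have hvc : ContinuousOn v (Ioo (0:ℝ) 1) :=
    fun r hr => ((hs r hr).2.differentiableAt.continuousAt).continuousWithinAt
  have hBC := BC_contOn (n := n) (γ := γ) hε
  have hrhs : ContinuousOn (fun r => Cco n γ ε r * h r - Bco n ε r * v r) (Ioo (0:ℝ) 1) :=
    (hBC.2.mul hhc).sub (hBC.1.mul hvc)
  have hderiv_h : EqOn (deriv h) v (Ioo (0:ℝ) 1) := fun r hr => ((hs r hr).1).deriv
  have hderiv_v : EqOn (deriv v) (fun r => Cco n γ ε r * h r - Bco n ε r * v r)
      (Ioo (0:ℝ) 1) := fun r hr => ((hs r hr).2).deriv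
  have hv1 : ContDiffOn ℝ 1 v (Ioo (0:ℝ) 1) := by
    rw [show (1:WithTop ℕ∞) = 0+1 by norm_num, contDiffOn_succ_iff_deriv_of_isOpen hO]
    refine ⟨fun r hr => ((hs r hr).2).differentiableAt.differentiableWithinAt,
      by simp, ?_⟩
    rw [contDiffOn_zero]
    exact hrhs.congr hderiv_v
  have hh2 : ContDiffOn ℝ 2 h (Ioo (0:ℝ) 1) := by
    rw [show (2:WithTop ℕ∞) = 1+1 by norm_num, contDiffOn_succ_iff_deriv_of_isOpen hO]
    refine ⟨fun r hr => ((hs r hr).1).differentiableAt.differentiableWithinAt,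
      by simp, ?_⟩
    exact hv1.congr hderiv_h
  refine ⟨fun r hr => hh2.contDiffAt (hO.mem_nhds hr), fun r hr => ?_, hderiv_h⟩
  have hL : Lop n γ ε h r = (Cco n γ ε r * h r - Bco n ε r * v r)
      + Bco n ε r * v r - Cco n γ ε r * h r := by
    apply Lop_val (f1 := v)
    · filter_upwards [hO.mem_nhds hr] with x hx using (hs x hx).1
    · exact (hs r hr).2
  rw [hL]; ring

include hn hγ hε in
/-- Vanishing lemma: if `h` and `v` vanish at an interior point, `h ≡ 0` to the right. -/
lemma sys_vanish {h v : ℝ → ℝ} (hs : IsSys n γ ε h v) {r0 : ℝ} (hr0 : r0 ∈ Ioo (0:ℝ) 1)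
    (h0 : h r0 = 0) (v0 : v r0 = 0) : ∀ b ∈ Ico r0 1, h b = 0 := by
  intro b hb
  rcases eq_or_lt_of_le hb.1 with he | hlt
  · rw [← he]; exact h0
  have hb1 : b < 1 := hb.2
  have hr00 : 0 < r0 := hr0.1
  have ha0 : 0 < r0/2 := by linarith
  have ha1 : r0/2 < 1 := by linarith [hr0.2]
  set cl : ℝ → ℝ := fun t => min (max t (r0/2)) 1 with hcl
  have hclmem : ∀ t, cl t ∈ Icc (r0/2) 1 :=
    fun t => ⟨le_min (le_max_right t (r0/2)) ha1.le, min_le_right _ _⟩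
  have hcleq : ∀ t ∈ Icc (r0/2) 1, cl t = t := by
    intro t ht
    show min (max t (r0/2)) 1 = t
    rw [max_eq_left ht.1, min_eq_left ht.2]
  set vcl : ℝ → ℝ × ℝ → ℝ × ℝ := fun t y => Fv n γ ε (cl t) y with hvcl
  have hv : ∀ t, LipschitzOnWith (Kv n γ ε (r0/2)) (vcl t) univ :=
    fun t => ((Fv_lip hn hγ hε ha0) (cl t) (hclmem t)).lipschitzOnWith
  set P : ℝ → ℝ × ℝ := fun r => (h r, v r) with hP
  have hsub : Icc (r0/2) b ⊆ Ioo (0:ℝ) 1 := fun y hy => ⟨lt_of_lt_of_le ha0 hy.1,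
    lt_of_le_of_lt hy.2 hb1⟩
  have hPd : ∀ t ∈ Ioo (r0/2) b, HasDerivAt P (vcl t (P t)) t := by
    intro t ht
    have htm : t ∈ Ioo (0:ℝ) 1 := hsub ⟨ht.1.le, ht.2.le⟩
    have hde := ((hs t htm).1).prodMk ((hs t htm).2)
    have : vcl t (P t) = (v t, Cco n γ ε t * h t - Bco n ε t * v t) := by
      show Fv n γ ε (cl t) (P t) = _
      rw [hcleq t ⟨ht.1.le, le_trans ht.2.le hb1.le⟩]
      rfl
    rw [this]
    exact hde
  have hZd : ∀ t ∈ Ioo (r0/2) b, HasDerivAt (fun _ : ℝ => ((0:ℝ),(0:ℝ))) (vcl t ((0:ℝ),(0:ℝ))) t := by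
    intro t _
    have : vcl t ((0:ℝ),(0:ℝ)) = ((0:ℝ),(0:ℝ)) := by
      show Fv n γ ε (cl t) 0 = 0
      exact Fv_zero _
    rw [this]
    exact hasDerivAt_const t _
  have hPc : ContinuousOn P (Icc (r0/2) b) := by
    intro y hy
    have hym : y ∈ Ioo (0:ℝ) 1 := hsub hy
    exact (((hs y hym).1.continuousAt).prodMk ((hs y hym).2.continuousAt)).continuousWithinAt
  have hZc : ContinuousOn (fun _ : ℝ => ((0:ℝ),(0:ℝ))) (Icc (r0/2) b) := continuousOn_const
  have heq0 : P r0 = ((0:ℝ),(0:ℝ)) := by rw [hP]; simp [h0, v0]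
  have hEq := ODE_solution_unique_of_mem_Icc (fun t _ => hv t) ⟨(by linarith : r0/2 < r0), hlt⟩
    hPc hPd (fun _ _ => mem_univ _) hZc hZd (fun _ _ => mem_univ _) heq0
  have := hEq ⟨(by linarith : r0/2 ≤ b), le_rfl⟩
  exact congrArg Prod.fst this

end syslemmas
section neglemma

variable {n : ℕ} {γ ε : ℝ} (hn : 2 ≤ n) (hγ : 1 < γ) (hε : 0 < ε)

include hε in
/-- The integrating factor: `(p v)' = p c h` where `p = r^(n-2)(ε+r²)`. -/
lemma intfact {h v : ℝ → ℝ} (hs : IsSys n γ ε h v) {r : ℝ} (hr : r ∈ Ioo (0:ℝ) 1) :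
    HasDerivAt (fun x => (x ^ ((n:ℝ)-2) * (ε + x^2)) * v x)
      ((r ^ ((n:ℝ)-2) * (ε + r^2)) * (Cco n γ ε r * h r)) r := by
  have hr0 : 0 < r := hr.1
  have hrne : r ≠ 0 := ne_of_gt hr0
  have h1 := Real.hasDerivAt_rpow_const (x := r) (p := (n:ℝ)-2) (Or.inl hrne)
  have h2 : HasDerivAt (fun x : ℝ => ε + x^2) (2*r) r := by
    have h3 := (hasDerivAt_pow 2 r).const_add ε
    simpa using h3
  have hp := h1.mul h2
  have hv' := (hs r hr).2
  have htot := hp.mul hv'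
  have key : ((n:ℝ)-2) * r^(((n:ℝ)-2)-1) * (ε + r^2) + r^((n:ℝ)-2) * (2*r)
      = (r ^ ((n:ℝ)-2) * (ε + r^2)) * Bco n ε r := by
    rw [Real.rpow_sub_one hrne]
    unfold Bco
    have hsne : ε + r^2 ≠ 0 := ne_of_gt (by positivity)
    field_simp
  refine htot.congr_deriv ?_
  rw [key]; simp only [Pi.mul_apply]; ring

include hn hγ hε in
/-- If a solution with `h 1 = 1` is negative somewhere, it is negative all the way to `0`. -/
lemma sys_neg {h v : ℝ → ℝ} (hs : IsSys n γ ε h v) (hone : h 1 = 1)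
    (hcont : ∀ x ∈ Ioo (0:ℝ) 1, ContinuousOn h (Icc x 1))
    {r1 : ℝ} (hr1 : r1 ∈ Ioo (0:ℝ) 1) (hneg : h r1 < 0) :
    ∀ r ∈ Ioc (0:ℝ) r1, h r < 0 := by
  by_contra hcon
  push_neg at hcon
  obtain ⟨r0, hr0m, hr0⟩ := hcon
  have hr0r1 : r0 < r1 := by
    rcases eq_or_lt_of_le hr0m.2 with he | hl
    · exfalso; rw [he] at hr0; linarith
    · exact hl
  have hr00 : 0 < r0 := hr0m.1
  have hr11 : r1 < 1 := hr1.2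
  -- ζ : first zero above r1
  set S := Icc r1 1 ∩ h ⁻¹' (Ici 0) with hS
  have hSclosed : IsClosed S :=
    (hcont r1 hr1).preimage_isClosed_of_isClosed isClosed_Icc isClosed_Ici
  have hSne : S.Nonempty := ⟨1, ⟨hr11.le, le_rfl⟩, by simp [hone]⟩
  have hSbdd : BddBelow S := ⟨r1, fun x hx => hx.1.1⟩
  set ζ := sInf S with hζ
  have hζS : ζ ∈ S := hSclosed.csInf_mem hSne hSbdd
  have hζmem : ζ ∈ Icc r1 1 := hζS.1
  have hhζ : 0 ≤ h ζ := hζS.2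
  have hbelow : ∀ r, r1 ≤ r → r < ζ → h r < 0 := by
    intro r hrr1 hrζ
    by_contra hc
    push_neg at hc
    have : r ∈ S := ⟨⟨hrr1, le_trans hrζ.le hζmem.2⟩, hc⟩
    have := csInf_le hSbdd this
    linarith
  have hr1ζ : r1 < ζ := by
    rcases eq_or_lt_of_le hζmem.1 with he | hl
    · exfalso; rw [← he] at hhζ; linarith
    · exact hl
  have hζ0 : h ζ = 0 := by
    refine le_antisymm ?_ hhζ
    by_contra hpos0
    push_neg at hpos0
    have hcw : ContinuousWithinAt h (Ioo r1 ζ) ζ :=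
      (((hcont r1 hr1)) ζ hζmem).mono (fun y hy => ⟨hy.1.le, le_trans hy.2.le hζmem.2⟩)
    have hnb : (𝓝[Ioo r1 ζ] ζ).NeBot := by
      rw [← mem_closure_iff_nhdsWithin_neBot, closure_Ioo (ne_of_lt hr1ζ)]
      exact ⟨hr1ζ.le, le_rfl⟩
    have hev := hcw.eventually (eventually_gt_nhds hpos0)
    obtain ⟨y, hy1, hy2⟩ := (hev.and self_mem_nhdsWithin).exists
    exact absurd hy1 (not_lt.mpr (hbelow y hy2.1.le hy2.2).le)
  have hζ1 : ζ < 1 := by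
    rcases eq_or_lt_of_le hζmem.2 with he | hl
    · exfalso; rw [he, hone] at hζ0; linarith
    · exact hl
  -- ξ : last zero below r1
  have hcontT : ContinuousOn h (Icc r0 r1) :=
    (hcont r0 ⟨hr00, lt_trans hr0r1 hr11⟩).mono (Icc_subset_Icc le_rfl hr11.le)
  set T := Icc r0 r1 ∩ h ⁻¹' (Ici 0) with hT
  have hTclosed : IsClosed T :=
    hcontT.preimage_isClosed_of_isClosed isClosed_Icc isClosed_Ici
  have hTne : T.Nonempty := ⟨r0, ⟨le_rfl, hr0r1.le⟩, hr0⟩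
  have hTbdd : BddAbove T := ⟨r1, fun x hx => hx.1.2⟩
  set ξ := sSup T with hξ
  have hξT : ξ ∈ T := hTclosed.csSup_mem hTne hTbdd
  have hξmem : ξ ∈ Icc r0 r1 := hξT.1
  have hhξ : 0 ≤ h ξ := hξT.2
  have hξr1 : ξ < r1 := by
    rcases eq_or_lt_of_le hξmem.2 with he | hl
    · exfalso; rw [he] at hhξ; linarith
    · exact hl
  have habove : ∀ r, ξ < r → r ≤ r1 → h r < 0 := by
    intro r hrξ hrr1
    by_contra hc
    push_neg at hc
    have : r ∈ T := ⟨⟨le_trans hξmem.1 hrξ.le, hrr1⟩, hc⟩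
    have := le_csSup hTbdd this
    linarith
  have hξ0 : h ξ = 0 := by
    refine le_antisymm ?_ hhξ
    by_contra hpos0
    push_neg at hpos0
    have hcw : ContinuousWithinAt h (Ioo ξ r1) ξ :=
      (hcontT ξ hξmem).mono (fun y hy => ⟨le_trans hξmem.1 hy.1.le, hy.2.le⟩)
    have hnb : (𝓝[Ioo ξ r1] ξ).NeBot := by
      rw [← mem_closure_iff_nhdsWithin_neBot, closure_Ioo (ne_of_lt hξr1)]
      exact ⟨le_rfl, hξr1.le⟩
    have hev := hcw.eventually (eventually_gt_nhds hpos0)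
    obtain ⟨y, hy1, hy2⟩ := (hev.and self_mem_nhdsWithin).exists
    exact absurd hy1 (not_lt.mpr (habove y hy2.1 hy2.2.le).le)
  have hmid : ∀ r, ξ < r → r < ζ → h r < 0 := by
    intro r h1 h2
    rcases le_or_gt r r1 with hc | hc
    · exact habove r h1 hc
    · exact hbelow r hc.le h2
  have hsubIoo : Icc ξ ζ ⊆ Ioo (0:ℝ) 1 :=
    fun y hy => ⟨lt_of_lt_of_le (lt_of_lt_of_le hr00 hξmem.1) hy.1, lt_of_le_of_lt hy.2 hζ1⟩
  -- MVT on [ξ, r1]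
  obtain ⟨η1, hη1m, hη1⟩ := exists_hasDerivAt_eq_slope h v hξr1
    (hcontT.mono (Icc_subset_Icc hξmem.1 le_rfl))
    (fun x hx => (hs x (hsubIoo ⟨hx.1.le, le_trans hx.2.le hr1ζ.le⟩)).1)
  rw [hξ0, sub_zero] at hη1
  have hvη1 : v η1 < 0 := by
    rw [hη1]
    apply div_neg_of_neg_of_pos hneg
    linarith [hη1m.1, hη1m.2]
  -- MVT on [r1, ζ]
  obtain ⟨η2, hη2m, hη2⟩ := exists_hasDerivAt_eq_slope h v hr1ζ
    ((hcont r1 hr1).mono (Icc_subset_Icc le_rfl hζmem.2))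
    (fun x hx => (hs x (hsubIoo ⟨le_trans hξr1.le hx.1.le, hx.2.le⟩)).1)
  rw [hζ0] at hη2
  have hvη2 : 0 < v η2 := by
    rw [hη2]
    apply div_pos (by linarith)
    linarith [hη2m.1, hη2m.2]
  -- integrating factor: g = p v strictly decreasing on [η1, η2], contradiction
  set p : ℝ → ℝ := fun x => x ^ ((n:ℝ)-2) * (ε + x^2) with hpdef
  have hppos : ∀ x, 0 < x → 0 < p x := by
    intro x hx
    have h1 : (0:ℝ) < x ^ ((n:ℝ)-2) := Real.rpow_pos_of_pos hx _
    have h2 : (0:ℝ) < ε + x^2 := by positivity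
    exact mul_pos h1 h2
  set g : ℝ → ℝ := fun x => p x * v x with hgdef
  have hη1η2 : η1 < η2 := lt_trans hη1m.2 hη2m.1
  have hsub2 : Icc η1 η2 ⊆ Ioo (0:ℝ) 1 := by
    intro y hy
    exact hsubIoo ⟨le_trans hη1m.1.le hy.1, le_trans hy.2 hη2m.2.le⟩
  have hganti : StrictAntiOn g (Icc η1 η2) := by
    apply strictAntiOn_of_deriv_neg (convex_Icc η1 η2)
    · intro y hy
      exact ((intfact hε hs (hsub2 hy)).continuousAt).continuousWithinAt
    · intro y hy
      rw [interior_Icc] at hy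
      have hym := hsub2 (Ioo_subset_Icc_self hy)
      rw [(intfact hε hs hym).deriv]
      have hy0 : 0 < y := hym.1
      have hhy : h y < 0 := hmid y (lt_trans hη1m.1 hy.1) (lt_trans hy.2 hη2m.2)
      exact mul_neg_of_pos_of_neg (hppos y hy0)
        (mul_neg_of_pos_of_neg (Cco_pos hn hγ hε y) hhy)
  have hgη1 : g η1 < 0 := mul_neg_of_pos_of_neg (hppos η1 (hsub2 ⟨le_rfl, hη1η2.le⟩).1) hvη1
  have hgη2 : 0 < g η2 := mul_pos (hppos η2 (hsub2 ⟨hη1η2.le, le_rfl⟩).1) hvη2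
  have := hganti ⟨le_rfl, hη1η2.le⟩ ⟨hη1η2.le, le_rfl⟩ hη1η2
  linarith

end neglemma
section finalhelpers

lemma hasDerivAt_comp_fst {f : ℝ → ℝ × ℝ} {d : ℝ × ℝ} {x : ℝ} (hf : HasDerivAt f d x) :
    HasDerivAt (fun y => (f y).1) d.1 x :=
  (ContinuousLinearMap.fst ℝ ℝ ℝ).hasFDerivAt.comp_hasDerivAt x hf

lemma hasDerivAt_comp_snd {f : ℝ → ℝ × ℝ} {d : ℝ × ℝ} {x : ℝ} (hf : HasDerivAt f d x) :
    HasDerivAt (fun y => (f y).2) d.2 x :=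
  (ContinuousLinearMap.snd ℝ ℝ ℝ).hasFDerivAt.comp_hasDerivAt x hf

lemma Lop_sub {n : ℕ} {γ ε : ℝ} {f g : ℝ → ℝ} {r : ℝ}
    (hf : ContDiffAt ℝ 2 f r) (hg : ContDiffAt ℝ 2 g r) :
    Lop n γ ε (fun x => f x - g x) r = Lop n γ ε f r - Lop n γ ε g r := by
  obtain ⟨hfe, hfd⟩ := cd2 hf
  obtain ⟨hge, hgd⟩ := cd2 hg
  have had : ∀ᶠ x in 𝓝 r, HasDerivAt (fun x => f x - g x) (deriv f x - deriv g x) x := by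
    filter_upwards [hfe, hge] with x h1 h2 using h1.sub h2
  have h2d : HasDerivAt (fun x => deriv f x - deriv g x)
      (deriv (deriv f) r - deriv (deriv g) r) r :=
    hfd.hasDerivAt.sub hgd.hasDerivAt
  rw [Lop_val had h2d, Lop_def, Lop_def]
  ring

variable {n : ℕ} {γ ε : ℝ} (hε : 0 < ε)

include hε in
lemma sys_contIcc {h v : ℝ → ℝ} (hs : IsSys n γ ε h v)
    (hc1 : ContinuousWithinAt h (Icc (1/2:ℝ) 1) 1) :
    ∀ x ∈ Ioo (0:ℝ) 1, ContinuousOn h (Icc x 1) := by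
  intro x hx r hr
  rcases eq_or_lt_of_le hr.2 with he | hl
  · rw [he]
    apply hc1.mono_of_mem_nhdsWithin
    apply Filter.mem_of_superset (inter_mem_nhdsWithin (Icc x 1)
      (Ioi_mem_nhds (by norm_num : (1/2:ℝ) < 1)))
    intro y hy
    exact ⟨hy.2.le, hy.1.2⟩
  · exact ((hs r ⟨lt_of_lt_of_le hx.1 hr.1, hl⟩).1.differentiableAt.continuousAt).continuousWithinAt

end finalhelpers
set_option maxHeartbeats 3200000 in
/-- Lemma 7.1: existence, uniqueness, and bounds for the normalized solution `h`. -/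
theorem ode_existence_uniqueness (n : ℕ) (hn : 2 ≤ n) (γ ε : ℝ) (hγ : 1 < γ) (hε : 0 < ε) :
    ∃ h : ℝ → ℝ, IsODESol n γ ε h ∧
      (∀ h' : ℝ → ℝ, IsODESol n γ ε h' → EqOn h' h (Icc (0:ℝ) 1)) ∧
      StrictMonoOn h (Icc (0:ℝ) 1) ∧
      (∀ r ∈ Ioo (0:ℝ) 1, r < h r ∧ h r < r ^ alphaN n γ) ∧
      ∃ Cε : ℝ, 0 < Cε ∧ ∀ r ∈ Ioo (0:ℝ) 1, h r < Cε * r := by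
  have hγ0 : (0:ℝ) < γ := by linarith
  set α := alphaN n γ with hαdef
  have hα0 : 0 < α := alpha_pos hn hγ
  have hα1 : α < 1 := alpha_lt_one hn hγ
  obtain ⟨u, hu1, hu2, hu3⟩ := exists_glob hn hγ hε ((1:ℝ), (0:ℝ))
  obtain ⟨z, hz1, hz2, hz3⟩ := exists_glob hn hγ hε ((0:ℝ), (1:ℝ))
  set H : ℝ → ℝ → ℝ := fun t r => if r ≤ 0 then 0 else (u r).1 + t * (z r).1 with hHdef
  set V : ℝ → ℝ → ℝ := fun t r => (u r).2 + t * (z r).2 with hVdef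
  have hHsys : ∀ t, IsSys n γ ε (H t) (V t) := by
    intro t r hr
    have hru : HasDerivAt u (Fv n γ ε r (u r)) r := hu2 r hr
    have hrz : HasDerivAt z (Fv n γ ε r (z r)) r := hz2 r hr
    have hb1 : HasDerivAt (fun x => (u x).1 + t * (z x).1) ((u r).2 + t * (z r).2) r := by
      have hfu := hasDerivAt_comp_fst hru
      have hfz := hasDerivAt_comp_fst hrz
      exact hfu.add (hfz.const_mul t)
    constructor
    · apply hb1.congr_of_eventuallyEq
      filter_upwards [Ioi_mem_nhds hr.1] with x hx
      show (if x ≤ 0 then (0:ℝ) else (u x).1 + t * (z x).1) = _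
      rw [if_neg (not_le.mpr hx)]
    · have hb2 : HasDerivAt (fun x => (u x).2 + t * (z x).2)
          ((Cco n γ ε r * (u r).1 - Bco n ε r * (u r).2)
            + t * (Cco n γ ε r * (z r).1 - Bco n ε r * (z r).2)) r :=
        (hasDerivAt_comp_snd hru).add ((hasDerivAt_comp_snd hrz).const_mul t)
      have hveq : (Cco n γ ε r * (u r).1 - Bco n ε r * (u r).2)
            + t * (Cco n γ ε r * (z r).1 - Bco n ε r * (z r).2)
          = Cco n γ ε r * H t r - Bco n ε r * V t r := by
        show _ = Cco n γ ε r * (if r ≤ 0 then (0:ℝ) else (u r).1 + t * (z r).1) - _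
        rw [if_neg (not_le.mpr hr.1)]
        show _ = _ - Bco n ε r * ((u r).2 + t * (z r).2)
        ring
      rw [hveq] at hb2
      exact hb2
  have hH1 : ∀ t, H t 1 = 1 := by
    intro t
    show (if (1:ℝ) ≤ 0 then (0:ℝ) else (u 1).1 + t * (z 1).1) = 1
    rw [if_neg (by norm_num), hu1, hz1]
    norm_num
  have hH0 : ∀ t, H t 0 = 0 := by
    intro t
    show (if (0:ℝ) ≤ 0 then (0:ℝ) else (u 0).1 + t * (z 0).1) = 0
    rw [if_pos le_rfl]
  have hHc1 : ∀ t, ContinuousWithinAt (H t) (Icc (1/2:ℝ) 1) 1 := by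
    intro t
    have hcu : ContinuousWithinAt u (Icc (1/2:ℝ) 1) 1 := hu3.continuousWithinAt
    have hcz : ContinuousWithinAt z (Icc (1/2:ℝ) 1) 1 := hz3.continuousWithinAt
    have hbase : ContinuousWithinAt (fun x => (u x).1 + t * (z x).1) (Icc (1/2:ℝ) 1) 1 :=
      (hcu.fst).add ((hcz.fst).const_smul t)
    apply hbase.congr
    · intro y hy
      show (if y ≤ 0 then (0:ℝ) else (u y).1 + t * (z y).1) = _
      rw [if_neg (not_le.mpr (lt_of_lt_of_le (by norm_num) hy.1))]
    · show (if (1:ℝ) ≤ 0 then (0:ℝ) else (u 1).1 + t * (z 1).1) = _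
      rw [if_neg (by norm_num)]
  have hHtr : ∀ t r, 0 < r → H t r = (u r).1 + t * (z r).1 := by
    intro t r hr
    show (if r ≤ 0 then (0:ℝ) else (u r).1 + t * (z r).1) = _
    rw [if_neg (not_le.mpr hr)]
  have hHcont_t : ∀ r, 0 < r → Continuous (fun t => H t r) := by
    intro r hr
    have : (fun t => H t r) = fun t => (u r).1 + t * (z r).1 := by
      funext t
      exact hHtr t r hr
    rw [this]
    exact continuous_const.add (continuous_id.mul continuous_const)
  -- a point near 1 where z's first component is negative
  have hzneg : ∃ r1 ∈ Ioo (0:ℝ) 1, (z r1).1 < 0 := by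
    have hzd : HasDerivWithinAt (fun r => (z r).1) ((Fv n γ ε 1 (z 1)).1) (Icc (1/2:ℝ) 1) 1 :=
      (ContinuousLinearMap.fst ℝ ℝ ℝ).hasFDerivAt.comp_hasDerivWithinAt 1 hz3
    have hval : (Fv n γ ε 1 (z 1)).1 = 1 := by rw [hz1]; rfl
    rw [hval] at hzd
    have hslope := hasDerivWithinAt_iff_tendsto_slope.mp hzd
    have hev := hslope.eventually (eventually_gt_nhds (by norm_num : (1/2:ℝ) < 1))
    have hset : Icc (1/2:ℝ) 1 \ {1} = Ico (1/2:ℝ) 1 := Icc_sdiff_right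
    rw [hset] at hev
    have hnb : (𝓝[Ico (1/2:ℝ) 1] 1).NeBot := by
      rw [← mem_closure_iff_nhdsWithin_neBot, closure_Ico (by norm_num : (1/2:ℝ) ≠ 1)]
      exact ⟨by norm_num, le_rfl⟩
    obtain ⟨y, hy1, hy2⟩ := (hev.and self_mem_nhdsWithin).exists
    refine ⟨y, ⟨lt_of_lt_of_le (by norm_num) hy2.1, hy2.2⟩, ?_⟩
    have hz10 : (z 1).1 = 0 := by rw [hz1]
    rw [slope_def_field, hz10, sub_zero] at hy1
    have hyne : y - 1 < 0 := sub_neg.mpr hy2.2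
    by_contra hc
    push_neg at hc
    have : (z y).1 / (y - 1) ≤ 0 := div_nonpos_of_nonneg_of_nonpos hc hyne.le
    linarith
  obtain ⟨r1, hr1m, hr1z⟩ := hzneg
  have hr1z' : (z r1).1 ≠ 0 := ne_of_lt hr1z
  -- the open sets A and B
  set A : Set ℝ := {t | ∃ r ∈ Ioo (0:ℝ) 1, H t r < 0} with hAdef
  set B : Set ℝ := {t | ∃ r ∈ Ioo (0:ℝ) 1, r ^ α < H t r} with hBdef
  have hAopen : IsOpen A := by
    rw [isOpen_iff_mem_nhds]
    rintro t ⟨r, hr, hneg⟩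
    have hcont := hHcont_t r hr.1
    have hopen : IsOpen {t' | H t' r < 0} := isOpen_lt hcont continuous_const
    apply Filter.mem_of_superset (hopen.mem_nhds hneg)
    intro t' ht'
    exact ⟨r, hr, ht'⟩
  have hBopen : IsOpen B := by
    rw [isOpen_iff_mem_nhds]
    rintro t ⟨r, hr, hgt⟩
    have hcont := hHcont_t r hr.1
    have hopen : IsOpen {t' | r ^ α < H t' r} := isOpen_lt continuous_const hcont
    apply Filter.mem_of_superset (hopen.mem_nhds hgt)
    intro t' ht'
    exact ⟨r, hr, ht'⟩
  have hAne : A.Nonempty := by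
    refine ⟨((u r1).1 + 1)/(-(z r1).1), r1, hr1m, ?_⟩
    rw [hHtr _ r1 hr1m.1]
    have : ((u r1).1 + 1)/(-(z r1).1) * (z r1).1 = -((u r1).1 + 1) := by
      rw [div_neg, neg_mul, div_mul_cancel₀ _ hr1z']
    rw [this]
    linarith
  have hBne : B.Nonempty := by
    refine ⟨(r1 ^ α + 1 - (u r1).1)/((z r1).1), r1, hr1m, ?_⟩
    rw [hHtr _ r1 hr1m.1]
    have : (r1 ^ α + 1 - (u r1).1)/((z r1).1) * (z r1).1 = r1 ^ α + 1 - (u r1).1 :=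
      div_mul_cancel₀ _ hr1z'
    rw [this]
    linarith
  have hdisj : ∀ t, t ∈ A → t ∈ B → False := by
    rintro t ⟨ra, hra, hHa⟩ ⟨rb, hrb, hHb⟩
    have hsys := hHsys t
    have hcontI := sys_contIcc hε hsys (hHc1 t)
    have hsm := sys_smooth hε hsys
    have hNEG := sys_neg hn hγ hε hsys (hH1 t) hcontI hra hHa
    have hrbα : (0:ℝ) < rb ^ α := Real.rpow_pos_of_pos hrb.1 _
    rcases le_or_gt rb ra with hcs | hcs
    · have := hNEG rb ⟨hrb.1, hcs⟩
      linarith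
    · set T := Icc ra rb ∩ (H t) ⁻¹' (Iic 0) with hT
      have hTc : IsClosed T :=
        ((hcontI ra hra).mono (Icc_subset_Icc le_rfl hrb.2.le)).preimage_isClosed_of_isClosed
          isClosed_Icc isClosed_Iic
      have hTne : T.Nonempty := ⟨ra, ⟨le_rfl, hcs.le⟩, hHa.le⟩
      have hTbdd : BddAbove T := ⟨rb, fun x hx => hx.1.2⟩
      set a := sSup T with ha
      have haT : a ∈ T := hTc.csSup_mem hTne hTbdd
      have ham : a ∈ Icc ra rb := haT.1
      have hha : H t a ≤ 0 := haT.2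
      have ha0 : 0 < a := lt_of_lt_of_le hra.1 ham.1
      have harb : a < rb := by
        rcases eq_or_lt_of_le ham.2 with he | hl
        · exfalso; rw [he] at hha; linarith
        · exact hl
      have ha1 : a < 1 := lt_trans harb hrb.2
      have haα : (0:ℝ) < a ^ α := Real.rpow_pos_of_pos ha0 _
      have hMP := MP2 hn hγ hε (w := fun x => H t x - x ^ α) ha1 ?_ ?_ ?_ ?_ ?_
      · have := hMP rb ⟨harb, hrb.2⟩
        linarith
      · apply ContinuousOn.sub ((hcontI a ⟨ha0, ha1⟩))
        intro x hx
        exact (Real.continuousAt_rpow_const x α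
          (Or.inl (ne_of_gt (lt_of_lt_of_le ha0 hx.1)))).continuousWithinAt
      · intro r hrr
        have hrm : r ∈ Ioo (0:ℝ) 1 := ⟨lt_trans ha0 hrr.1, hrr.2⟩
        exact (hsm.1 r hrm).sub (Real.contDiffAt_rpow_const_of_ne (ne_of_gt hrm.1))
      · intro r hrr
        have hrm : r ∈ Ioo (0:ℝ) 1 := ⟨lt_trans ha0 hrr.1, hrr.2⟩
        rw [Lop_sub (hsm.1 r hrm) (Real.contDiffAt_rpow_const_of_ne (ne_of_gt hrm.1)),
          hsm.2.1 r hrm]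
        have hneg := Lop_rpow hn hγ hε hrm
        rw [← hαdef] at hneg
        linarith
      · linarith
      · rw [hH1 t, Real.one_rpow]
        norm_num
  have hex : ∃ t0, t0 ∉ A ∧ t0 ∉ B := by
    by_contra hcon
    push_neg at hcon
    have hcover : (univ : Set ℝ) ⊆ A ∪ B := by
      intro t _
      rcases em (t ∈ A) with h | h
      · exact Or.inl h
      · exact Or.inr (hcon t h)
    obtain ⟨x, hx⟩ := isPreconnected_univ A B hAopen hBopen hcover
      ⟨hAne.choose, mem_univ _, hAne.choose_spec⟩ ⟨hBne.choose, mem_univ _, hBne.choose_spec⟩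
    exact hdisj x hx.2.1 hx.2.2
  obtain ⟨t0, ht0A, ht0B⟩ := hex
  have hge0 : ∀ r ∈ Ioo (0:ℝ) 1, 0 ≤ H t0 r := by
    intro r hr
    by_contra hc
    push_neg at hc
    exact ht0A ⟨r, hr, hc⟩
  have hlea : ∀ r ∈ Ioo (0:ℝ) 1, H t0 r ≤ r ^ α := by
    intro r hr
    by_contra hc
    push_neg at hc
    exact ht0B ⟨r, hr, hc⟩
  have hsys0 := hHsys t0
  have hsm0 := sys_smooth hε hsys0
  have hcontI0 := sys_contIcc hε hsys0 (hHc1 t0)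
  have hpos : ∀ r ∈ Ioo (0:ℝ) 1, 0 < H t0 r := by
    intro r hr
    rcases (hge0 r hr).lt_or_eq with h | heq
    · exact h
    · exfalso
      have hlocmin : IsLocalMin (H t0) r := by
        filter_upwards [Ioo_mem_nhds hr.1 hr.2] with y hy
        rw [← heq]
        exact hge0 y hy
      have hd0 : deriv (H t0) r = 0 := hlocmin.deriv_eq_zero
      have hv0 : V t0 r = 0 := by rw [← hsm0.2.2 r hr]; exact hd0
      have hvan := sys_vanish hn hγ hε hsys0 hr heq.symm hv0
      have hcw : ContinuousWithinAt (H t0) (Ico r 1) 1 :=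
        ((hcontI0 r hr) 1 ⟨hr.2.le, le_rfl⟩).mono (fun y hy => ⟨hy.1, hy.2.le⟩)
      have hnb : (𝓝[Ico r 1] 1).NeBot := by
        rw [← mem_closure_iff_nhdsWithin_neBot, closure_Ico (ne_of_lt hr.2)]
        exact ⟨hr.2.le, le_rfl⟩
      have htend : Tendsto (H t0) (𝓝[Ico r 1] 1) (𝓝 1) := by
        have := hcw
        rw [ContinuousWithinAt, hH1 t0] at this
        exact this
      have htend0 : Tendsto (H t0) (𝓝[Ico r 1] 1) (𝓝 0) := by
        apply Tendsto.congr' _ (tendsto_const_nhds (α := ℝ) (x := (0:ℝ)))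
        filter_upwards [self_mem_nhdsWithin] with y hy
        exact (hvan y hy).symm
      have := tendsto_nhds_unique htend htend0
      norm_num at this
  -- strict upper barrier
  have htlt : ∀ r ∈ Ioo (0:ℝ) 1, H t0 r < r ^ α := by
    intro r hr
    rcases (hlea r hr).lt_or_eq with h | heq
    · exact h
    · exfalso
      have hC2w : ContDiffAt ℝ 2 (fun x => H t0 x - x ^ α) r :=
        (hsm0.1 r hr).sub (Real.contDiffAt_rpow_const_of_ne (ne_of_gt hr.1))
      have hmax : IsLocalMax (fun x => H t0 x - x ^ α) r := by
        filter_upwards [Ioo_mem_nhds hr.1 hr.2] with y hy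
        show H t0 y - y ^ α ≤ H t0 r - r ^ α
        rw [heq]
        have := hlea y hy
        linarith
      have hd1 : deriv (fun x => H t0 x - x ^ α) r = 0 := hmax.deriv_eq_zero
      have hd2 : deriv (deriv (fun x => H t0 x - x ^ α)) r ≤ 0 :=
        second_deriv_nonpos_of_localmax hC2w hmax
      have hLw : Lop n γ ε (fun x => H t0 x - x ^ α) r
          = Lop n γ ε (H t0) r - Lop n γ ε (fun x => x ^ α) r :=
        Lop_sub (hsm0.1 r hr) (Real.contDiffAt_rpow_const_of_ne (ne_of_gt hr.1))
      have hLpos : 0 < Lop n γ ε (fun x => H t0 x - x ^ α) r := by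
        rw [hLw, hsm0.2.1 r hr]
        have := Lop_rpow hn hγ hε hr
        rw [← hαdef] at this
        linarith
      rw [Lop_def, hd1, mul_zero, add_zero] at hLpos
      have hw0 : H t0 r - r ^ α = 0 := by rw [heq]; ring
      rw [hw0, mul_zero, sub_zero] at hLpos
      linarith
  -- continuity on [0,1]
  have hCont01 : ContinuousOn (H t0) (Icc (0:ℝ) 1) := by
    intro r hr
    rcases eq_or_lt_of_le hr.1 with he0 | h0
    · rw [← he0]
      have hub : ∀ x ∈ Icc (0:ℝ) 1, H t0 x ≤ x ^ α := by
        intro x hx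
        rcases eq_or_lt_of_le hx.1 with hx0 | hx0
        · rw [← hx0, hH0, Real.zero_rpow (ne_of_gt hα0)]
        rcases eq_or_lt_of_le hx.2 with hx1 | hx1
        · rw [hx1, hH1, Real.one_rpow]
        · exact hlea x ⟨hx0, hx1⟩
      have hlb : ∀ x ∈ Icc (0:ℝ) 1, 0 ≤ H t0 x := by
        intro x hx
        rcases eq_or_lt_of_le hx.1 with hx0 | hx0
        · rw [← hx0, hH0]
        rcases eq_or_lt_of_le hx.2 with hx1 | hx1
        · rw [hx1, hH1]; norm_num
        · exact hge0 x ⟨hx0, hx1⟩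
      have hgt : Tendsto (fun x : ℝ => x ^ α) (𝓝[Icc (0:ℝ) 1] 0) (𝓝 0) := by
        have hct := (Real.continuousAt_rpow_const 0 α (Or.inr hα0.le)).tendsto
        rw [Real.zero_rpow (ne_of_gt hα0)] at hct
        exact hct.mono_left nhdsWithin_le_nhds
      have hsq : Tendsto (H t0) (𝓝[Icc (0:ℝ) 1] 0) (𝓝 0) := by
        apply squeeze_zero' _ _ hgt
        · filter_upwards [self_mem_nhdsWithin] with x hx using hlb x hx
        · filter_upwards [self_mem_nhdsWithin] with x hx using hub x hx
      rw [ContinuousWithinAt, hH0]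
      exact hsq
    rcases eq_or_lt_of_le hr.2 with he1 | h1
    · rw [he1]
      apply (hHc1 t0).mono_of_mem_nhdsWithin
      apply Filter.mem_of_superset (inter_mem_nhdsWithin (Icc (0:ℝ) 1)
        (Ioi_mem_nhds (by norm_num : (1/2:ℝ) < 1)))
      intro y hy
      exact ⟨hy.2.le, hy.1.2⟩
    · exact ((hsys0 r ⟨h0, h1⟩).1.differentiableAt.continuousAt).continuousWithinAt
  -- lower barrier
  have hlow : ∀ r ∈ Ioo (0:ℝ) 1, r < H t0 r := by
    have hMP := MP2 hn hγ hε (w := fun x => x - H t0 x) one_pos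
      ((continuous_id.continuousOn).sub hCont01)
      (fun r hr => (contDiffAt_id).sub (hsm0.1 r hr))
      ?_ (by simp [hH0]) (by simp [hH1])
    · intro r hr
      have := hMP r hr
      linarith
    · intro r hr
      rw [Lop_sub (f := fun x => x) (g := H t0) contDiffAt_id (hsm0.1 r hr),
        hsm0.2.1 r hr]
      have := (Lop_id hn hγ hε hr).2
      linarith
  -- the linear upper bound C(ε) r
  have hM0 : (0:ℝ) < 1 + 1/ε := by positivity
  set M : ℝ := 1 + 1/ε with hM
  have hM0' : 0 < M := hM0
  have hMε : 1/ε ≤ M := by rw [hM]; linarith [hM0]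
  set δ : ℝ := min (1/2 : ℝ) (1/(2*M)) with hδ
  have hδ0 : 0 < δ := lt_min (by norm_num) (by positivity)
  have hδhalf : δ ≤ 1/2 := min_le_left _ _
  have hδ1 : δ < 1 := lt_of_le_of_lt hδhalf (by norm_num)
  have hδM : M * δ^2 ≤ 1/4 := by
    have h1 : δ ≤ 1/(2*M) := min_le_right _ _
    calc M*δ^2 = (M*δ)*δ := by ring
    _ ≤ (M*(1/(2*M)))*δ := by
        apply mul_le_mul_of_nonneg_right _ hδ0.le
        exact mul_le_mul_of_nonneg_left h1 hM0'.le
    _ = δ/2 := by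
        have hMne : M ≠ 0 := ne_of_gt hM0'
        field_simp
    _ ≤ 1/4 := by linarith
  have hδcube : δ/2 ≤ δ - M*δ^3 := by
    have : M*δ^3 = (M*δ^2)*δ := by ring
    nlinarith [hδ0, hδM]
  set A0 : ℝ := 2*δ^(α-1) with hA0def
  have hδα1 : 0 < δ^(α-1) := Real.rpow_pos_of_pos hδ0 _
  have hA00 : 0 < A0 := by rw [hA0def]; linarith
  have hδαeq : δ^(α-1)*δ = δ^α := by
    rw [Real.rpow_sub_one (ne_of_gt hδ0)]
    field_simp
  have hδA : δ ^ α ≤ A0 * (δ - M*δ^3) := by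
    have h1 : A0*(δ/2) ≤ A0*(δ - M*δ^3) := mul_le_mul_of_nonneg_left hδcube hA00.le
    have h2 : A0*(δ/2) = δ^(α-1)*δ := by rw [hA0def]; ring
    rw [h2, hδαeq] at h1
    exact h1
  have hMP2 := MP2 hn hγ hε (w := fun x => H t0 x - A0*(x - M*x^3)) hδ0
    (x := 0) (y := δ)
    ((hCont01.mono (Icc_subset_Icc le_rfl hδ1.le)).sub
      ((continuous_const.mul (continuous_id.sub
        (continuous_const.mul (continuous_pow 3)))).continuousOn))
    ?_ ?_ (by show H t0 0 - A0*((0:ℝ) - M*0^3) ≤ 0; rw [hH0]; norm_num) ?_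
  · -- main continuation
    have hCb : ∀ r ∈ Ioo (0:ℝ) 1, H t0 r < A0 * r := by
      intro r hr
      rcases lt_trichotomy r δ with hc | hc | hc
      · have h1 := hMP2 r ⟨hr.1, hc⟩
        have h2 : 0 < A0*(M*r^3) := mul_pos hA00 (mul_pos hM0' (pow_pos hr.1 3))
        nlinarith
      · have h1 := htlt r hr
        have h2 : A0*(δ - M*δ^3) < A0*δ := by
          apply mul_lt_mul_of_pos_left _ hA00
          have : 0 < M*δ^3 := mul_pos hM0' (pow_pos hδ0 3)
          linarith
        rw [hc]
        calc H t0 δ < δ^α := by rw [← hc]; exact h1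
        _ ≤ A0*(δ - M*δ^3) := hδA
        _ < A0*δ := h2
      · have h1 : r^(α-1) ≤ δ^(α-1) :=
          Real.rpow_le_rpow_of_nonpos hδ0 hc.le (by linarith)
        have h2 : r^α = r^(α-1)*r := by
          rw [Real.rpow_sub_one (ne_of_gt hr.1), div_mul_cancel₀ _ (ne_of_gt hr.1)]
        calc H t0 r < r^α := htlt r hr
        _ = r^(α-1)*r := h2
        _ ≤ δ^(α-1)*r := mul_le_mul_of_nonneg_right h1 hr.1.le
        _ < A0*r := by
            rw [hA0def]
            nlinarith [hδα1, hr.1]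
    -- positivity of the derivative, strict monotonicity
    have hppos : ∀ x : ℝ, 0 < x → 0 < x ^ ((n:ℝ)-2) * (ε + x^2) := by
      intro x hx
      exact mul_pos (Real.rpow_pos_of_pos hx _) (by positivity)
    have hvpos : ∀ r ∈ Ioo (0:ℝ) 1, 0 < V t0 r := by
      intro r0 hr0
      by_contra hcv
      push_neg at hcv
      have hvneg : ∀ s ∈ Ioo (0:ℝ) r0, V t0 s < 0 := by
        intro s hs
        have hsub01 : Icc s r0 ⊆ Ioo (0:ℝ) 1 :=
          fun y hy => ⟨lt_of_lt_of_le hs.1 hy.1, lt_of_le_of_lt hy.2 hr0.2⟩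
        have hmono_g : StrictMonoOn (fun x => (x ^ ((n:ℝ)-2) * (ε + x^2)) * V t0 x)
            (Icc s r0) := by
          apply strictMonoOn_of_deriv_pos (convex_Icc s r0)
          · intro y hy
            exact ((intfact hε hsys0 (hsub01 hy)).continuousAt).continuousWithinAt
          · intro y hy
            rw [interior_Icc] at hy
            have hym := hsub01 (Ioo_subset_Icc_self hy)
            rw [(intfact hε hsys0 hym).deriv]
            exact mul_pos (hppos y hym.1)
              (mul_pos (Cco_pos hn hγ hε y) (hpos y hym))
        have h1 := hmono_g ⟨le_rfl, hs.2.le⟩ ⟨hs.2.le, le_rfl⟩ hs.2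
        have h2 : (r0 ^ ((n:ℝ)-2) * (ε + r0^2)) * V t0 r0 ≤ 0 :=
          mul_nonpos_of_nonneg_of_nonpos (hppos r0 hr0.1).le hcv
        by_contra hcc
        push_neg at hcc
        have h3 : 0 ≤ (s ^ ((n:ℝ)-2) * (ε + s^2)) * V t0 s :=
          mul_nonneg (hppos s hs.1).le hcc
        simp only at h1
        linarith
      set t1 : ℝ := min (r0/2) (r0^((1:ℝ)/α)/2) with ht1
      have hr0α : 0 < r0^((1:ℝ)/α) := Real.rpow_pos_of_pos hr0.1 _
      have ht10 : 0 < t1 := lt_min (by linarith [hr0.1]) (by linarith)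
      have ht1r0 : t1 < r0 := lt_of_le_of_lt (min_le_left _ _) (by linarith [hr0.1])
      have ht1m : t1 ∈ Ioo (0:ℝ) 1 := ⟨ht10, lt_trans ht1r0 hr0.2⟩
      have hanti : StrictAntiOn (H t0) (Icc t1 r0) := by
        apply strictAntiOn_of_deriv_neg (convex_Icc t1 r0)
        · exact hCont01.mono (Icc_subset_Icc ht10.le hr0.2.le)
        · intro y hy
          rw [interior_Icc] at hy
          have hym : y ∈ Ioo (0:ℝ) 1 := ⟨lt_trans ht10 hy.1, lt_trans hy.2 hr0.2⟩
          rw [hsm0.2.2 y hym]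
          exact hvneg y ⟨hym.1, hy.2⟩
      have h1 : H t0 r0 < H t0 t1 :=
        hanti ⟨le_rfl, ht1r0.le⟩ ⟨ht1r0.le, le_rfl⟩ ht1r0
      have ht1α : t1^α < r0 := by
        have e1 : t1 ≤ r0^((1:ℝ)/α)/2 := min_le_right _ _
        have e2 : t1 < r0^((1:ℝ)/α) := lt_of_le_of_lt e1 (by linarith)
        have e3 : t1^α < (r0^((1:ℝ)/α))^α := Real.rpow_lt_rpow ht10.le e2 hα0
        rwa [← Real.rpow_mul hr0.1.le, one_div,
          inv_mul_cancel₀ (ne_of_gt hα0), Real.rpow_one] at e3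
      have h2 : H t0 t1 < t1^α := htlt t1 ht1m
      have h3 : r0 < H t0 r0 := hlow r0 hr0
      linarith
    have hmono : StrictMonoOn (H t0) (Icc (0:ℝ) 1) := by
      apply strictMonoOn_of_deriv_pos (convex_Icc 0 1) hCont01
      intro x hx
      rw [interior_Icc] at hx
      rw [hsm0.2.2 x hx]
      exact hvpos x hx
    -- uniqueness
    have huniq : ∀ h' : ℝ → ℝ, IsODESol n γ ε h' → EqOn h' (H t0) (Icc (0:ℝ) 1) := by
      rintro h' ⟨hc', hs', hl', h0', h1'⟩
      have hL1 : ∀ r ∈ Ioo (0:ℝ) 1, Lop n γ ε (fun x => h' x - H t0 x) r = 0 := by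
        intro r hr
        rw [Lop_sub (hs' r hr) (hsm0.1 r hr), hl' r hr, hsm0.2.1 r hr]
        ring
      have hL2 : ∀ r ∈ Ioo (0:ℝ) 1, Lop n γ ε (fun x => H t0 x - h' x) r = 0 := by
        intro r hr
        rw [Lop_sub (hsm0.1 r hr) (hs' r hr), hl' r hr, hsm0.2.1 r hr]
        ring
      have hw1 := MP1 hn hγ hε (w := fun x => h' x - H t0 x) one_pos
        (hc'.sub hCont01)
        (fun r hr => (hs' r hr).sub (hsm0.1 r hr))
        (fun r hr => le_of_eq (hL1 r hr).symm)
        (by show h' 0 - H t0 0 ≤ 0; rw [h0', hH0]; norm_num)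
        (by show h' 1 - H t0 1 ≤ 0; rw [h1', hH1]; norm_num)
      have hw2 := MP1 hn hγ hε (w := fun x => H t0 x - h' x) one_pos
        (hCont01.sub hc')
        (fun r hr => (hsm0.1 r hr).sub (hs' r hr))
        (fun r hr => le_of_eq (hL2 r hr).symm)
        (by show H t0 0 - h' 0 ≤ 0; rw [h0', hH0]; norm_num)
        (by show H t0 1 - h' 1 ≤ 0; rw [h1', hH1]; norm_num)
      intro r hr
      have e1 := hw1 r hr
      have e2 := hw2 r hr
      linarith
    exact ⟨H t0, ⟨hCont01, hsm0.1, hsm0.2.1, hH0 t0, hH1 t0⟩, huniq, hmono,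
      fun r hr => ⟨hlow r hr, htlt r hr⟩, A0, hA00, hCb⟩
  · -- C² of the cubic comparison function
    intro r hrr
    have hrm : r ∈ Ioo (0:ℝ) 1 := ⟨hrr.1, lt_trans hrr.2 hδ1⟩
    exact (hsm0.1 r hrm).sub ((contDiff_const.mul (contDiff_id.sub
      (contDiff_const.mul (contDiff_id.pow 3)))).contDiffAt)
  · -- strict subsolution property
    intro r hrr
    have hrm : r ∈ Ioo (0:ℝ) 1 := ⟨hrr.1, lt_trans hrr.2 hδ1⟩
    have hcd : ContDiffAt ℝ 2 (fun x : ℝ => A0*(x - M*x^3)) r :=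
      (contDiff_const.mul (contDiff_id.sub
        (contDiff_const.mul (contDiff_id.pow 3)))).contDiffAt
    rw [Lop_sub (hsm0.1 r hrm) hcd, hsm0.2.1 r hrm]
    have hc := Lop_cubic hn hγ hε hrm hA00
    rw [← hM] at hc
    linarith
  · -- value at δ
    show H t0 δ - A0*(δ - M*δ^3) ≤ 0
    have := htlt δ ⟨hδ0, hδ1⟩
    linarith [hδA]
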